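/- arXiv:1508.00867 — 3 statements merged into one kernel-verified Lean document; each statement's English description precedes it below -/
import Mathlib

section
/- Let R ⊆ G be the union of all closed intercommunicating classes of the G-stochastic function P_(·). Then every probability measure μ compatible with the imitation kernel p satisfies μ({x ∈ G^ℤ : x_n ∈ R for all n ∈ ℤ}) = 1. -/
open MeasureTheory
open scoped BigOperators

/-- The matrix of a word `𝐚 = (a_1, …, a_n)` (encoded as a list `[a_1, …, a_n]`),
namely `P_𝐚 = P_(a_n) ⋯ P_(a_1)`, so that `wordK P l i j` is the `(i,j)` entry. -/
noncomputable def wordK {G : Type*} [Fintype G] [DecidableEq G]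
    (P : ℕ → G → G → ℝ) : List ℕ → G → G → ℝ
  | [] => fun i j => if i = j then 1 else 0
  | a :: l => fun i j => ∑ m, wordK P l i m * P a m j

/-- A word over the alphabet `A`: a nonempty finite tuple with entries in `A`. -/
def IsWord (A : Set ℕ) (l : List ℕ) : Prop := l ≠ [] ∧ ∀ a ∈ l, a ∈ A

/-- `i` communicates with `j` if `P_𝐚(i,j) > 0` for some word `𝐚`. -/
def Communicates {G : Type*} [Fintype G] [DecidableEq G]
    (A : Set ℕ) (P : ℕ → G → G → ℝ) (i j : G) : Prop :=
  ∃ l : List ℕ, IsWord A l ∧ 0 < wordK P l i j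

/-- `i` and `j` intercommunicate (every state intercommunicates with itself). -/
def Intercommunicates {G : Type*} [Fintype G] [DecidableEq G]
    (A : Set ℕ) (P : ℕ → G → G → ℝ) (i j : G) : Prop :=
  i = j ∨ (Communicates A P i j ∧ Communicates A P j i)

/-- An intercommunicating class: an equivalence class of the intercommunication relation. -/
def IsInterClass {G : Type*} [Fintype G] [DecidableEq G]
    (A : Set ℕ) (P : ℕ → G → G → ℝ) (C : Set G) : Prop :=
  ∃ i : G, C = {j | Intercommunicates A P i j}

/-- A set `C` is closed if whenever `i ∈ C` communicates with `j`, then `j ∈ C`. -/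
def IsClosedClass {G : Type*} [Fintype G] [DecidableEq G]
    (A : Set ℕ) (P : ℕ → G → G → ℝ) (C : Set G) : Prop :=
  ∀ i ∈ C, ∀ j : G, Communicates A P i j → j ∈ C

/-- `d` is the greatest common divisor of the set `S ⊆ ℕ`. -/
def IsGCDOfSet (S : Set ℕ) (d : ℕ) : Prop :=
  (∀ n ∈ S, d ∣ n) ∧ ∀ e : ℕ, (∀ n ∈ S, e ∣ n) → e ∣ d

/-- The set of depths `s(𝐚)` of words `𝐚` with `P_𝐚(i,i) > 0`. -/
def ReturnDepths {G : Type*} [Fintype G] [DecidableEq G]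
    (A : Set ℕ) (P : ℕ → G → G → ℝ) (i : G) : Set ℕ :=
  {s | ∃ l : List ℕ, IsWord A l ∧ 0 < wordK P l i i ∧ l.sum = s}

/-- `E` is measurable with respect to the coordinates `(x_m)_{m < n}`. -/
def PastMeasurable {G : Type*} [MeasurableSpace G] (n : ℤ) (E : Set (ℤ → G)) : Prop :=
  MeasurableSet[MeasurableSpace.comap
    (fun x : ℤ → G => fun m : {m : ℤ // m < n} => x m.1) MeasurableSpace.pi] E

/-- `μ` is compatible with the imitation kernel
`p(g | w_{-1}, w_{-2}, …) = ∑_{k ∈ A} θ_k P_(k)(w_{-k}, g)` (here `θ` vanishes off `A`). -/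
def Compatible {G : Type*} [MeasurableSpace G] (θ : ℕ → ℝ) (P : ℕ → G → G → ℝ)
    (μ : Measure (ℤ → G)) : Prop :=
  ∀ (n : ℤ) (g : G) (E : Set (ℤ → G)), PastMeasurable n E →
    (μ (E ∩ {x | x n = g})).toReal
      = ∫ x in E, (∑' k : ℕ, θ k * P k (x (n - (k : ℤ))) g) ∂μ

open scoped ENNReal NNReal

section Det
variable {G : Type*} [Fintype G] [DecidableEq G]
variable (A : Set ℕ) (P : ℕ → G → G → ℝ)

/-- The union of all closed intercommunicating classes. -/
def Rset : Set G := {j | ∃ C : Set G, IsInterClass A P C ∧ IsClosedClass A P C ∧ j ∈ C}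

variable {A P}

lemma wordK_nonneg (hPnn : ∀ k ∈ A, ∀ i j : G, 0 ≤ P k i j) :
    ∀ (l : List ℕ), (∀ a ∈ l, a ∈ A) → ∀ i j : G, 0 ≤ wordK P l i j := by
  intro l
  induction l with
  | nil => intro _ i j; simp only [wordK]; split <;> norm_num
  | cons a l ih =>
    intro hl i j
    apply Finset.sum_nonneg
    intro m _
    exact mul_nonneg (ih (fun b hb => hl b (List.mem_cons_of_mem _ hb)) i m)
      (hPnn a (hl a (List.mem_cons_self)) m j)

lemma wordK_append (l₁ l₂ : List ℕ) (i j : G) :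
    wordK P (l₁ ++ l₂) i j = ∑ m, wordK P l₂ i m * wordK P l₁ m j := by
  induction l₁ generalizing j with
  | nil => simp [wordK]
  | cons a l₁ ih =>
    calc wordK P ((a :: l₁) ++ l₂) i j
        = ∑ m, ∑ h, wordK P l₂ i h * wordK P l₁ h m * P a m j := by
          show ∑ m, wordK P (l₁ ++ l₂) i m * P a m j = _
          simp [ih, Finset.sum_mul]
      _ = ∑ h, ∑ m, wordK P l₂ i h * wordK P l₁ h m * P a m j := Finset.sum_comm
      _ = ∑ h, wordK P l₂ i h * wordK P (a :: l₁) h j := by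
          simp [wordK, Finset.mul_sum, mul_assoc]

lemma comm_trans (hPnn : ∀ k ∈ A, ∀ i j : G, 0 ≤ P k i j) {i j z : G}
    (h₁ : Communicates A P i j) (h₂ : Communicates A P j z) : Communicates A P i z := by
  obtain ⟨l, ⟨hl0, hlA⟩, hl⟩ := h₁
  obtain ⟨l', ⟨hl0', hlA'⟩, hl'⟩ := h₂
  refine ⟨l' ++ l, ⟨by simp [hl0'], fun a ha => by
    rcases List.mem_append.mp ha with h | h
    exacts [hlA' a h, hlA a h]⟩, ?_⟩
  rw [wordK_append]
  have : 0 < wordK P l i j * wordK P l' j z := mul_pos hl hl'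
  calc (0:ℝ) < wordK P l i j * wordK P l' j z := this
    _ ≤ ∑ m, wordK P l i m * wordK P l' m z := by
        apply Finset.single_le_sum (f := fun m => wordK P l i m * wordK P l' m z)
          (fun m _ => mul_nonneg (wordK_nonneg hPnn l hlA i m) (wordK_nonneg hPnn l' hlA' m z))
          (Finset.mem_univ j)

lemma step_comm {k : ℕ} (hk : k ∈ A) {i j : G} (h : 0 < P k i j) :
    Communicates A P i j := by
  refine ⟨[k], ⟨by simp, by simp [hk]⟩, ?_⟩
  show 0 < ∑ m, wordK P [] i m * P k m j
  simp only [wordK]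
  rw [Finset.sum_eq_single i]
  · simpa using h
  · intro b _ hb; simp [Ne.symm hb]
  · simp


lemma exists_step (hA : A.Nonempty) (hPnn : ∀ k ∈ A, ∀ i j : G, 0 ≤ P k i j)
    (hProw : ∀ k ∈ A, ∀ i : G, ∑ j, P k i j = 1) (i : G) :
    ∃ j, Communicates A P i j := by
  obtain ⟨k, hk⟩ := hA
  have h1 : (0:ℝ) < ∑ j, P k i j := by rw [hProw k hk i]; norm_num
  have : ∃ j ∈ Finset.univ, 0 < P k i j := by
    by_contra h
    push_neg at h
    have : ∑ j, P k i j ≤ 0 := Finset.sum_nonpos (fun j hj => h j hj)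
    linarith
  obtain ⟨j, _, hj⟩ := this
  exact ⟨j, step_comm hk hj⟩

lemma mem_Rset_of_comm {i j : G} (hi : i ∈ Rset A P) (h : Communicates A P i j) :
    j ∈ Rset A P := by
  obtain ⟨C, hC1, hC2, hiC⟩ := hi
  exact ⟨C, hC1, hC2, hC2 i hiC j h⟩

lemma reach_Rset (hA : A.Nonempty) (hPnn : ∀ k ∈ A, ∀ i j : G, 0 ≤ P k i j)
    (hProw : ∀ k ∈ A, ∀ i : G, ∑ j, P k i j = 1) (i : G) :
    ∃ j, Communicates A P i j ∧ j ∈ Rset A P := by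
  set S : G → Set G := fun i => {j | Communicates A P i j} with hS
  have hfin : ∀ i, (S i).Finite := fun i => Set.toFinite _
  have hne : ∀ i : G, (S i).Nonempty := fun i => exists_step hA hPnn hProw i
  have hsub : ∀ {i j : G}, j ∈ S i → S j ⊆ S i := by
    intro i j hj z hz
    exact comm_trans hPnn hj hz
  -- strong induction on ncard (S i)
  suffices H : ∀ N : ℕ, ∀ i : G, (S i).ncard ≤ N → ∃ j, Communicates A P i j ∧ j ∈ Rset A P by
    exact H (S i).ncard i le_rfl
  intro N
  induction N with
  | zero =>
    intro i hi
    exact absurd ((Set.ncard_eq_zero (hfin i)).mp (Nat.le_zero.mp hi))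
      (Set.nonempty_iff_ne_empty.mp (hne i))
  | succ N ih =>
    intro i hi
    by_cases h : ∃ j ∈ S i, (S j).ncard < (S i).ncard
    · obtain ⟨j, hj, hlt⟩ := h
      have : (S j).ncard ≤ N := by omega
      obtain ⟨j', hj', hR⟩ := ih j this
      exact ⟨j', comm_trans hPnn hj hj', hR⟩
    · push_neg at h
      have heq : ∀ j ∈ S i, S j = S i := by
        intro j hj
        exact Set.eq_of_subset_of_ncard_le (hsub hj) (h j hj) (hfin i)
      obtain ⟨j₀, hj₀⟩ := hne i
      have hj₀j₀ : Communicates A P j₀ j₀ := by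
        have : j₀ ∈ S j₀ := by rw [heq j₀ hj₀]; exact hj₀
        exact this
      refine ⟨j₀, hj₀, {j | Intercommunicates A P j₀ j}, ⟨j₀, rfl⟩, ?_, Or.inl rfl⟩
      intro j₁ hj₁ j₂ hj₂
      have hcomm02 : Communicates A P j₀ j₂ := by
        rcases hj₁ with rfl | ⟨h01, h10⟩
        · exact hj₂
        · exact comm_trans hPnn h01 hj₂
      have hj₂Si : j₂ ∈ S i := comm_trans hPnn hj₀ hcomm02
      have hcomm20 : Communicates A P j₂ j₀ := by
        have : j₀ ∈ S j₂ := by rw [heq j₂ hj₂Si]; exact hj₀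
        exact this
      exact Or.inr ⟨hcomm02, hcomm20⟩


section Qmatrix

attribute [local instance] Classical.propDecidable

/-- The averaged one-step matrix `Q = ∑ₖ θₖ P₍ₖ₎`. -/
noncomputable def Qmat (P' : ℕ → G → G → ℝ) (θ' : ℕ → ℝ) (i j : G) : ℝ :=
  ∑' k, θ' k * P' k i j

/-- Powers of `Q`. -/
noncomputable def Qpow (P' : ℕ → G → G → ℝ) (θ' : ℕ → ℝ) : ℕ → G → G → ℝ
  | 0 => fun i j => if i = j then 1 else 0
  | m + 1 => fun i j => ∑ h, Qpow P' θ' m i h * Qmat P' θ' h j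

variable {θ : ℕ → ℝ}
variable (hθpos : ∀ k ∈ A, 0 < θ k) (hθ0 : ∀ k, k ∉ A → θ k = 0)
  (hθsum : HasSum θ 1)
  (hPnn : ∀ k ∈ A, ∀ i j : G, 0 ≤ P k i j)
  (hProw : ∀ k ∈ A, ∀ i : G, ∑ j, P k i j = 1)

include hθpos hθ0 in
lemma theta_nonneg : ∀ k, 0 ≤ θ k := by
  intro k
  by_cases hk : k ∈ A
  · exact (hθpos k hk).le
  · rw [hθ0 k hk]

include hθpos hθ0 hPnn hProw in
lemma term_bounds (k : ℕ) (i j : G) : 0 ≤ θ k * P k i j ∧ θ k * P k i j ≤ θ k := by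
  by_cases hk : k ∈ A
  · have h1 : 0 ≤ P k i j := hPnn k hk i j
    have h2 : P k i j ≤ 1 := by
      calc P k i j ≤ ∑ m, P k i m :=
        Finset.single_le_sum (fun m _ => hPnn k hk i m) (Finset.mem_univ j)
      _ = 1 := hProw k hk i
    constructor
    · exact mul_nonneg (hθpos k hk).le h1
    · calc θ k * P k i j ≤ θ k * 1 := by
            apply mul_le_mul_of_nonneg_left h2 (hθpos k hk).le
      _ = θ k := mul_one _
  · rw [hθ0 k hk]; norm_num

include hθpos hθ0 hθsum hPnn hProw in
lemma Qterm_summable (i j : G) : Summable (fun k => θ k * P k i j) :=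
  Summable.of_nonneg_of_le (fun k => (term_bounds hθpos hθ0 hPnn hProw k i j).1)
    (fun k => (term_bounds hθpos hθ0 hPnn hProw k i j).2) hθsum.summable

include hθpos hθ0 hPnn hProw in
lemma Qmat_nonneg (i j : G) : 0 ≤ Qmat P θ i j :=
  tsum_nonneg (fun k => (term_bounds hθpos hθ0 hPnn hProw k i j).1)

include hθpos hθ0 hθsum hPnn hProw in
lemma Qmat_row (i : G) : ∑ j, Qmat P θ i j = 1 := by
  unfold Qmat
  rw [← Summable.tsum_finsetSum (fun j _ => Qterm_summable hθpos hθ0 hθsum hPnn hProw i j)]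
  rw [← hθsum.tsum_eq]
  congr 1; ext k
  by_cases hk : k ∈ A
  · rw [← Finset.mul_sum, hProw k hk i, mul_one]
  · simp [hθ0 k hk]

include hθpos hθ0 hPnn hProw in
lemma comm_of_Qmat_pos {i j : G} (h : 0 < Qmat P θ i j) : Communicates A P i j := by
  have : ∃ k, 0 < θ k * P k i j := by
    by_contra hc
    push_neg at hc
    have hz : ∀ k, θ k * P k i j = 0 := fun k =>
      le_antisymm (hc k) (term_bounds hθpos hθ0 hPnn hProw k i j).1
    have : Qmat P θ i j = 0 := by
      unfold Qmat
      simp only [hz]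
      exact tsum_zero
    rw [this] at h; exact lt_irrefl 0 h
  obtain ⟨k, hk⟩ := this
  have hkA : k ∈ A := by
    by_contra hkA
    rw [hθ0 k hkA, zero_mul] at hk
    exact lt_irrefl 0 hk
  have hP : 0 < P k i j := by
    rcases mul_pos_iff.mp hk with ⟨_, h2⟩ | ⟨h1, _⟩
    · exact h2
    · exact absurd h1 (not_lt.mpr (hθpos k hkA).le)
  exact step_comm hkA hP

include hθpos hθ0 hθsum hPnn hProw in
lemma Qmat_pos_of_step {k : ℕ} (hk : k ∈ A) {i j : G} (h : 0 < P k i j) :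
    0 < Qmat P θ i j := by
  have : θ k * P k i j ≤ Qmat P θ i j :=
    Summable.le_tsum (Qterm_summable hθpos hθ0 hθsum hPnn hProw i j) k
      (fun b _ => (term_bounds hθpos hθ0 hPnn hProw b i j).1)
  exact lt_of_lt_of_le (mul_pos (hθpos k hk) h) this

include hθpos hθ0 hPnn hProw in
lemma Qpow_nonneg (m : ℕ) (i j : G) : 0 ≤ Qpow P θ m i j := by
  induction m generalizing i j with
  | zero => unfold Qpow; split <;> norm_num
  | succ m ih =>
    exact Finset.sum_nonneg fun h _ => mul_nonneg (ih i h) (Qmat_nonneg hθpos hθ0 hPnn hProw h j)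

include hθpos hθ0 hθsum hPnn hProw in
lemma Qpow_row (m : ℕ) (i : G) : ∑ j, Qpow P θ m i j = 1 := by
  induction m generalizing i with
  | zero => simp [Qpow]
  | succ m ih =>
    show ∑ j, ∑ h, Qpow P θ m i h * Qmat P θ h j = 1
    rw [Finset.sum_comm]
    calc ∑ h, ∑ j, Qpow P θ m i h * Qmat P θ h j
        = ∑ h, Qpow P θ m i h * ∑ j, Qmat P θ h j := by
          simp [Finset.mul_sum]
      _ = 1 := by
          simp only [Qmat_row hθpos hθ0 hθsum hPnn hProw, mul_one]
          exact ih i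

include hθpos hθ0 hθsum hPnn hProw in
lemma Qmat_RT {i j : G} (hi : i ∈ Rset A P) (hj : j ∉ Rset A P) : Qmat P θ i j = 0 := by
  by_contra h
  have hpos : 0 < Qmat P θ i j :=
    lt_of_le_of_ne (Qmat_nonneg hθpos hθ0 hPnn hProw i j) (Ne.symm h)
  exact hj (mem_Rset_of_comm hi (comm_of_Qmat_pos hθpos hθ0 hPnn hProw hpos))

include hθpos hθ0 hθsum hPnn hProw in
lemma Qpow_RT (m : ℕ) {i j : G} (hi : i ∈ Rset A P) (hj : j ∉ Rset A P) :
    Qpow P θ m i j = 0 := by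
  induction m generalizing i j with
  | zero =>
    unfold Qpow
    split
    · next heq => exact absurd (heq ▸ hi) hj
    · rfl
  | succ m ih =>
    show ∑ h, Qpow P θ m i h * Qmat P θ h j = 0
    apply Finset.sum_eq_zero
    intro h _
    by_cases hh : h ∈ Rset A P
    · rw [Qmat_RT hθpos hθ0 hθsum hPnn hProw hh hj, mul_zero]
    · rw [ih hi hh, zero_mul]

lemma Qpow_add (m m' : ℕ) (i j : G) :
    Qpow P θ (m + m') i j = ∑ h, Qpow P θ m i h * Qpow P θ m' h j := by
  induction m' generalizing j with
  | zero =>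
    simp [Qpow, Finset.sum_ite_eq, mul_ite]
  | succ m' ih =>
    show ∑ h, Qpow P θ (m + m') i h * Qmat P θ h j = _
    calc ∑ h, Qpow P θ (m + m') i h * Qmat P θ h j
        = ∑ h, (∑ z, Qpow P θ m i z * Qpow P θ m' z h) * Qmat P θ h j := by
          simp only [ih]
      _ = ∑ z, ∑ h, Qpow P θ m i z * Qpow P θ m' z h * Qmat P θ h j := by
          rw [Finset.sum_comm]
          simp [Finset.sum_mul]
      _ = ∑ z, Qpow P θ m i z * ∑ h, Qpow P θ m' z h * Qmat P θ h j := by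
          simp [Finset.mul_sum, mul_assoc]
      _ = ∑ z, Qpow P θ m i z * Qpow P θ (m' + 1) z j := rfl

include hθpos hθ0 hθsum hPnn hProw in
lemma Qpow_pos_of_wordK {l : List ℕ} (hl : ∀ a ∈ l, a ∈ A) {i j : G}
    (h : 0 < wordK P l i j) : 0 < Qpow P θ l.length i j := by
  induction l generalizing j with
  | nil =>
    unfold wordK at h
    unfold Qpow
    split at h
    · next heq => subst heq; simp
    · exact absurd h (lt_irrefl 0)
  | cons a l ih =>
    have h' : 0 < ∑ m, wordK P l i m * P a m j := h
    have : ∃ m, 0 < wordK P l i m * P a m j := by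
      by_contra hc
      push_neg at hc
      have : ∑ m, wordK P l i m * P a m j ≤ 0 :=
        Finset.sum_nonpos (fun m _ => hc m)
      linarith
    obtain ⟨m, hm⟩ := this
    have hlA : ∀ b ∈ l, b ∈ A := fun b hb => hl b (List.mem_cons_of_mem _ hb)
    have haA : a ∈ A := hl a (List.mem_cons_self)
    have h1 : 0 < wordK P l i m := by
      rcases mul_pos_iff.mp hm with ⟨h1, _⟩ | ⟨h1, _⟩
      · exact h1
      · exact absurd h1 (not_lt.mpr (wordK_nonneg hPnn l hlA i m))
    have h2 : 0 < P a m j := by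
      rcases mul_pos_iff.mp hm with ⟨_, h2⟩ | ⟨_, h2⟩
      · exact h2
      · exact absurd h2 (not_lt.mpr (hPnn a haA m j))
    have hQ : 0 < Qmat P θ m j := Qmat_pos_of_step hθpos hθ0 hθsum hPnn hProw haA h2
    show 0 < ∑ h, Qpow P θ l.length i h * Qmat P θ h j
    calc (0:ℝ) < Qpow P θ l.length i m * Qmat P θ m j := mul_pos (ih hlA h1) hQ
      _ ≤ ∑ h, Qpow P θ l.length i h * Qmat P θ h j :=
        Finset.single_le_sum (f := fun h => Qpow P θ l.length i h * Qmat P θ h j)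
          (fun h _ => mul_nonneg (Qpow_nonneg hθpos hθ0 hPnn hProw _ i h)
            (Qmat_nonneg hθpos hθ0 hPnn hProw h j)) (Finset.mem_univ m)


/-- Mass on `R` after `m` steps. -/
noncomputable def rhoQ (m : ℕ) (i : G) : ℝ :=
  ∑ j, if j ∈ Rset A P then Qpow P θ m i j else 0

/-- Mass off `R` after `m` steps. -/
noncomputable def tauQ (m : ℕ) (i : G) : ℝ :=
  ∑ j, if j ∈ Rset A P then 0 else Qpow P θ m i j

include hθpos hθ0 hθsum hPnn hProw in
lemma rho_add_tau (m : ℕ) (i : G) :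
    rhoQ (A := A) (P := P) (θ := θ) m i + tauQ (A := A) (P := P) (θ := θ) m i = 1 := by
  unfold rhoQ tauQ
  rw [← Finset.sum_add_distrib, ← Qpow_row hθpos hθ0 hθsum hPnn hProw m i]
  apply Finset.sum_congr rfl
  intro j _
  split <;> ring

include hθpos hθ0 hPnn hProw in
lemma tau_nonneg (m : ℕ) (i : G) : 0 ≤ tauQ (A := A) (P := P) (θ := θ) m i := by
  apply Finset.sum_nonneg
  intro j _
  split
  · exact le_rfl
  · exact Qpow_nonneg hθpos hθ0 hPnn hProw m i j

include hθpos hθ0 hPnn hProw in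
lemma rho_nonneg (m : ℕ) (i : G) : 0 ≤ rhoQ (A := A) (P := P) (θ := θ) m i := by
  apply Finset.sum_nonneg
  intro j _
  split
  · exact Qpow_nonneg hθpos hθ0 hPnn hProw m i j
  · exact le_rfl

include hθpos hθ0 hθsum hPnn hProw in
lemma tau_le_one (m : ℕ) (i : G) : tauQ (A := A) (P := P) (θ := θ) m i ≤ 1 := by
  have h := rho_add_tau hθpos hθ0 hθsum hPnn hProw (A := A) (P := P) m i
  have h2 := rho_nonneg hθpos hθ0 hPnn hProw (A := A) (P := P) (θ := θ) m i
  linarith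

lemma tau_decomp (m m' : ℕ) (i : G) :
    tauQ (A := A) (P := P) (θ := θ) (m + m') i
      = ∑ h, Qpow P θ m i h * tauQ (A := A) (P := P) (θ := θ) m' h := by
  unfold tauQ
  calc ∑ j, (if j ∈ Rset A P then 0 else Qpow P θ (m + m') i j)
      = ∑ j, ∑ h, (if j ∈ Rset A P then 0 else Qpow P θ m i h * Qpow P θ m' h j) := by
        apply Finset.sum_congr rfl
        intro j _
        split
        · simp
        · rw [Qpow_add]
    _ = ∑ h, ∑ j, (if j ∈ Rset A P then 0 else Qpow P θ m i h * Qpow P θ m' h j) :=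
        Finset.sum_comm
    _ = ∑ h, Qpow P θ m i h * ∑ j, (if j ∈ Rset A P then 0 else Qpow P θ m' h j) := by
        apply Finset.sum_congr rfl
        intro h _
        rw [Finset.mul_sum]
        apply Finset.sum_congr rfl
        intro j _
        split <;> simp

include hθpos hθ0 hθsum hPnn hProw in
lemma tau_R_zero (m : ℕ) {h : G} (hh : h ∈ Rset A P) :
    tauQ (A := A) (P := P) (θ := θ) m h = 0 := by
  apply Finset.sum_eq_zero
  intro j _
  split
  · rfl
  · next hj => exact Qpow_RT hθpos hθ0 hθsum hPnn hProw m hh hj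

include hθpos hθ0 hθsum hPnn hProw in
lemma tau_mono (m m' : ℕ) (i : G) :
    tauQ (A := A) (P := P) (θ := θ) (m + m') i ≤ tauQ (A := A) (P := P) (θ := θ) m i := by
  rw [tau_decomp]
  have : tauQ (A := A) (P := P) (θ := θ) m i
      = ∑ h, Qpow P θ m i h * (if h ∈ Rset A P then 0 else 1) := by
    unfold tauQ
    apply Finset.sum_congr rfl
    intro h _
    split <;> ring
  rw [this]
  apply Finset.sum_le_sum
  intro h _
  apply mul_le_mul_of_nonneg_left _ (Qpow_nonneg hθpos hθ0 hPnn hProw m i h)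
  split
  · next hh => exact le_of_eq (tau_R_zero hθpos hθ0 hθsum hPnn hProw m' hh)
  · exact tau_le_one hθpos hθ0 hθsum hPnn hProw m' h

include hθpos hθ0 hθsum hPnn hProw in
lemma exists_tau_lt_one (hA : A.Nonempty) (i : G) :
    ∃ m : ℕ, tauQ (A := A) (P := P) (θ := θ) m i < 1 := by
  obtain ⟨j, hcomm, hjR⟩ := reach_Rset hA hPnn hProw i
  obtain ⟨l, ⟨hl0, hlA⟩, hl⟩ := hcomm
  have hq : 0 < Qpow P θ l.length i j :=
    Qpow_pos_of_wordK hθpos hθ0 hθsum hPnn hProw hlA hl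
  refine ⟨l.length, ?_⟩
  have hrho : Qpow P θ l.length i j ≤ rhoQ (A := A) (P := P) (θ := θ) l.length i := by
    unfold rhoQ
    have := Finset.single_le_sum
      (f := fun j' => if j' ∈ Rset A P then Qpow P θ l.length i j' else 0)
      (fun j' _ => by
        split
        · exact Qpow_nonneg hθpos hθ0 hPnn hProw _ i j'
        · exact le_rfl) (Finset.mem_univ j)
    simpa [hjR] using this
  have := rho_add_tau hθpos hθ0 hθsum hPnn hProw (A := A) (P := P) (θ := θ) l.length i
  linarith


include hθpos hθ0 hθsum hPnn hProw in
lemma tau_tendsto_zero [Nonempty G] (hA : A.Nonempty) {ε : ℝ} (hε : 0 < ε) :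
    ∃ m : ℕ, ∀ i : G, tauQ (A := A) (P := P) (θ := θ) m i ≤ ε := by
  set f : G → ℕ := fun i =>
    Classical.choose (exists_tau_lt_one hθpos hθ0 hθsum hPnn hProw hA i) with hf
  set M : ℕ := Finset.univ.sup f with hM
  have hτM : ∀ i : G, tauQ (A := A) (P := P) (θ := θ) M i < 1 := by
    intro i
    have hfi : f i ≤ M := Finset.le_sup (Finset.mem_univ i)
    have h1 : tauQ (A := A) (P := P) (θ := θ) (f i) i < 1 :=
      Classical.choose_spec (exists_tau_lt_one hθpos hθ0 hθsum hPnn hProw hA i)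
    have h2 : tauQ (A := A) (P := P) (θ := θ) (f i + (M - f i)) i
        ≤ tauQ (A := A) (P := P) (θ := θ) (f i) i :=
      tau_mono hθpos hθ0 hθsum hPnn hProw (f i) (M - f i) i
    rw [Nat.add_sub_cancel' hfi] at h2
    linarith
  set c : ℝ := Finset.univ.sup' Finset.univ_nonempty
    (fun i => tauQ (A := A) (P := P) (θ := θ) M i) with hc
  have hc1 : c < 1 := by
    rw [hc, Finset.sup'_lt_iff]
    intro i _
    exact hτM i
  have hc0 : 0 ≤ c := by
    obtain ⟨i⟩ := (inferInstance : Nonempty G)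
    exact le_trans (tau_nonneg hθpos hθ0 hPnn hProw M i)
      (Finset.le_sup' _ (Finset.mem_univ i))
  have hdecay : ∀ (m : ℕ) (i : G),
      tauQ (A := A) (P := P) (θ := θ) (m + M) i
        ≤ c * tauQ (A := A) (P := P) (θ := θ) m i := by
    intro m i
    rw [tau_decomp]
    have hrhs : c * tauQ (A := A) (P := P) (θ := θ) m i
        = ∑ h, Qpow P θ m i h * (if h ∈ Rset A P then 0 else c) := by
      unfold tauQ
      rw [Finset.mul_sum]
      apply Finset.sum_congr rfl
      intro h _
      split <;> ring
    rw [hrhs]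
    apply Finset.sum_le_sum
    intro h _
    apply mul_le_mul_of_nonneg_left _ (Qpow_nonneg hθpos hθ0 hPnn hProw m i h)
    split
    · next hh => exact le_of_eq (tau_R_zero hθpos hθ0 hθsum hPnn hProw M hh)
    · exact Finset.le_sup' _ (Finset.mem_univ h)
  have hiter : ∀ s : ℕ, ∀ i : G, tauQ (A := A) (P := P) (θ := θ) (s * M) i ≤ c ^ s := by
    intro s
    induction s with
    | zero =>
      intro i
      simpa using tau_le_one hθpos hθ0 hθsum hPnn hProw 0 i
    | succ s ih =>
      intro i
      have h1 : (s + 1) * M = s * M + M := by ring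
      rw [h1]
      calc tauQ (A := A) (P := P) (θ := θ) (s * M + M) i
          ≤ c * tauQ (A := A) (P := P) (θ := θ) (s * M) i := hdecay (s * M) i
        _ ≤ c * c ^ s := mul_le_mul_of_nonneg_left (ih i) hc0
        _ = c ^ (s + 1) := by ring
  have htend : Filter.Tendsto (fun s : ℕ => c ^ s) Filter.atTop (nhds 0) :=
    tendsto_pow_atTop_nhds_zero_of_lt_one hc0 hc1
  obtain ⟨s, hs⟩ := (htend.eventually (gt_mem_nhds hε)).exists
  exact ⟨s * M, fun i => le_of_lt (lt_of_le_of_lt (hiter s i) hs)⟩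

end Qmatrix

section MeasurePart

attribute [local instance] Classical.propDecidable

variable [MeasurableSpace G] [MeasurableSingletonClass G]
variable {θ : ℕ → ℝ}
variable {μ : Measure (ℤ → G)}

/-- Marginal of `μ` at time `n`. -/
noncomputable def piv (μ : Measure (ℤ → G)) (n : ℤ) (g : G) : ℝ :=
  (μ {x | x n = g}).toReal

lemma piv_nonneg (n : ℤ) (g : G) : 0 ≤ piv μ n g := ENNReal.toReal_nonneg

lemma piv_le_one [IsProbabilityMeasure μ] (n : ℤ) (g : G) : piv μ n g ≤ 1 := by
  have h : μ {x | x n = g} ≤ 1 := prob_le_one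
  calc piv μ n g ≤ (1 : ℝ≥0∞).toReal := ENNReal.toReal_mono (by norm_num) h
    _ = 1 := by norm_num

variable (hθpos : ∀ k ∈ A, 0 < θ k) (hθ0 : ∀ k, k ∉ A → θ k = 0)
  (hθsum : HasSum θ 1)
  (hPnn : ∀ k ∈ A, ∀ i j : G, 0 ≤ P k i j)
  (hProw : ∀ k ∈ A, ∀ i : G, ∑ j, P k i j = 1)

include hθpos hθ0 hPnn hProw in
lemma P_le_one {k : ℕ} (hk : k ∈ A) (i j : G) : P k i j ≤ 1 := by
  calc P k i j ≤ ∑ m, P k i m :=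
    Finset.single_le_sum (fun m _ => hPnn k hk i m) (Finset.mem_univ j)
  _ = 1 := hProw k hk i

include hθpos hθ0 hθsum in
lemma summable_of_theta_bound {u : ℕ → ℝ} {C : ℝ}
    (h0 : ∀ k, 0 ≤ u k) (hC : ∀ k, u k ≤ θ k * C) : Summable u :=
  Summable.of_nonneg_of_le h0 hC (hθsum.summable.mul_right C)

include hθpos hθ0 hθsum hPnn hProw in
lemma piv_rec [IsProbabilityMeasure μ] (hcomp : Compatible θ P μ) (n : ℤ) (g : G) :
    piv μ n g = ∑' k : ℕ, θ k * ∑ h, piv μ (n - (k : ℤ)) h * P k h g := by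
  have h0 := hcomp n g Set.univ MeasurableSet.univ
  rw [Set.univ_inter, MeasureTheory.setIntegral_univ] at h0
  have hmeask : ∀ k : ℕ, Measurable (fun x : ℤ → G => θ k * P k (x (n - (k : ℤ))) g) := by
    intro k
    exact (measurable_of_countable (fun h : G => θ k * P k h g)).comp
      (measurable_pi_apply (n - (k : ℤ)))
  have hbd : ∀ (k : ℕ) (x : ℤ → G), ‖θ k * P k (x (n - (k : ℤ))) g‖ ≤ ‖θ k‖ := by
    intro k x
    by_cases hk : k ∈ A
    · rw [norm_mul]
      calc ‖θ k‖ * ‖P k (x (n - (k:ℤ))) g‖ ≤ ‖θ k‖ * 1 := by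
            apply mul_le_mul_of_nonneg_left _ (norm_nonneg _)
            rw [Real.norm_eq_abs, abs_le]
            constructor
            · linarith [hPnn k hk (x (n - (k:ℤ))) g]
            · exact P_le_one hθpos hθ0 hPnn hProw hk _ g
        _ = ‖θ k‖ := mul_one _
    · simp [hθ0 k hk]
  have hsummθ : Summable (fun k : ℕ => ‖θ k‖₊) := by
    rw [← NNReal.summable_coe]
    have : (fun k : ℕ => ((‖θ k‖₊ : ℝ≥0) : ℝ)) = fun k => θ k := by
      funext k
      rw [coe_nnnorm, Real.norm_eq_abs, abs_of_nonneg (theta_nonneg hθpos hθ0 k)]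
    rw [this]
    exact hθsum.summable
  have hlint : ∑' (k : ℕ), ∫⁻ x, ‖θ k * P k (x (n - (k : ℤ))) g‖₊ ∂μ ≠ ⊤ := by
    apply ne_top_of_le_ne_top (b := ∑' (k : ℕ), (‖θ k‖₊ : ℝ≥0∞))
    · exact ENNReal.tsum_coe_ne_top_iff_summable.mpr hsummθ
    · apply ENNReal.tsum_le_tsum
      intro k
      calc ∫⁻ x, ‖θ k * P k (x (n - (k : ℤ))) g‖₊ ∂μ
          ≤ ∫⁻ _, (‖θ k‖₊ : ℝ≥0∞) ∂μ := by
            apply lintegral_mono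
            intro x
            exact ENNReal.coe_le_coe.mpr (by
              have := hbd k x
              rwa [← coe_nnnorm, ← coe_nnnorm, NNReal.coe_le_coe] at this)
        _ = ‖θ k‖₊ := by simp
  rw [MeasureTheory.integral_tsum (fun k => (hmeask k).aestronglyMeasurable) hlint] at h0
  unfold piv
  rw [h0]
  apply tsum_congr
  intro k
  rw [MeasureTheory.integral_const_mul]
  congr 1
  have hφ : Measurable (fun x : ℤ → G => x (n - (k : ℤ))) := measurable_pi_apply _
  haveI : IsProbabilityMeasure (μ.map (fun x : ℤ → G => x (n - (k : ℤ)))) :=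
    Measure.isProbabilityMeasure_map hφ.aemeasurable
  have hmapint : ∫ x, P k (x (n - (k : ℤ))) g ∂μ
      = ∫ h, P k h g ∂(μ.map (fun x : ℤ → G => x (n - (k : ℤ)))) :=
    (MeasureTheory.integral_map hφ.aemeasurable
      (measurable_of_countable (fun h : G => P k h g)).aestronglyMeasurable).symm
  rw [hmapint, MeasureTheory.integral_fintype Integrable.of_finite]
  apply Finset.sum_congr rfl
  intro h _
  rw [measureReal_def, Measure.map_apply hφ (measurableSet_singleton h)]
  have hpre : (fun x : ℤ → G => x (n - (k : ℤ))) ⁻¹' {h} = {x | x (n - (k : ℤ)) = h} := rfl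
  rw [hpre, smul_eq_mul]


lemma sum_swap_mul (v f : G → ℝ) (M : G → G → ℝ) :
    ∑ g, (∑ h, v h * M h g) * f g = ∑ h, v h * ∑ g, M h g * f g := by
  simp only [Finset.sum_mul, Finset.mul_sum]
  rw [Finset.sum_comm]
  simp [mul_assoc]

include hθpos hθ0 hθsum hPnn hProw in
lemma claim_bound [Nonempty G] [IsProbabilityMeasure μ] (hcomp : Compatible θ P μ) (m : ℕ) :
    ∀ (n : ℤ) (f : G → ℝ), (∀ g, 0 ≤ f g) → (∀ g, f g ≤ 1) → (∀ g ∈ Rset A P, f g = 0) →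
    ∑ g, piv μ n g * f g
      ≤ ∑ i, if i ∈ Rset A P then 0 else ∑ j, Qpow P θ m i j * f j := by
  set C : ℝ := (Fintype.card G : ℝ) with hC
  induction m with
  | zero =>
    intro n f hf0 hf1 hfR
    have hQ0 : ∀ i, ∑ j, Qpow P θ 0 i j * f j = f i := by
      intro i
      show ∑ j, (if i = j then (1:ℝ) else 0) * f j = f i
      simp [ite_mul, Finset.sum_ite_eq]
    calc ∑ g, piv μ n g * f g
        ≤ ∑ g, (if g ∈ Rset A P then 0 else f g) := by
          apply Finset.sum_le_sum
          intro g _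
          split
          · next hg => rw [hfR g hg, mul_zero]
          · calc piv μ n g * f g ≤ 1 * f g :=
              mul_le_mul_of_nonneg_right (piv_le_one n g) (hf0 g)
            _ = f g := one_mul _
      _ = ∑ i, if i ∈ Rset A P then 0 else ∑ j, Qpow P θ 0 i j * f j := by
          apply Finset.sum_congr rfl
          intro i _
          rw [hQ0 i]
  | succ m ih =>
    intro n f hf0 hf1 hfR
    set Pf : ℕ → G → ℝ := fun k h => ∑ g, P k h g * f g with hPfdef
    have hPf0 : ∀ k ∈ A, ∀ h, 0 ≤ Pf k h := fun k hk h =>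
      Finset.sum_nonneg fun g _ => mul_nonneg (hPnn k hk h g) (hf0 g)
    have hPf1 : ∀ k ∈ A, ∀ h, Pf k h ≤ 1 := by
      intro k hk h
      calc Pf k h ≤ ∑ g, P k h g := by
            apply Finset.sum_le_sum
            intro g _
            calc P k h g * f g ≤ P k h g * 1 :=
              mul_le_mul_of_nonneg_left (hf1 g) (hPnn k hk h g)
            _ = P k h g := mul_one _
        _ = 1 := hProw k hk h
    have hPfR : ∀ k ∈ A, ∀ h ∈ Rset A P, Pf k h = 0 := by
      intro k hk h hh
      apply Finset.sum_eq_zero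
      intro g _
      by_cases hgR : g ∈ Rset A P
      · rw [hfR g hgR, mul_zero]
      · have hPz : P k h g = 0 := by
          by_contra hc
          have hpos : 0 < P k h g := lt_of_le_of_ne (hPnn k hk h g) (Ne.symm hc)
          exact hgR (mem_Rset_of_comm hh (step_comm hk hpos))
        rw [hPz, zero_mul]
    -- generic bounds
    have hsum01 : ∀ (v : G → ℝ), (∀ h, 0 ≤ v h) → (∀ h, v h ≤ 1) →
        0 ≤ ∑ h, v h ∧ ∑ h, v h ≤ C := by
      intro v h0 h1
      refine ⟨Finset.sum_nonneg fun h _ => h0 h, ?_⟩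
      calc ∑ h, v h ≤ ∑ _h : G, (1:ℝ) := Finset.sum_le_sum (fun h _ => h1 h)
        _ = C := by simp [hC]
    have hsummW : ∀ (w : ℕ → ℝ), (∀ k ∈ A, 0 ≤ w k ∧ w k ≤ C) →
        Summable (fun k => θ k * w k) := by
      intro w hw
      apply summable_of_theta_bound hθpos hθ0 hθsum (C := C)
      · intro k
        by_cases hk : k ∈ A
        · exact mul_nonneg (hθpos k hk).le (hw k hk).1
        · simp [hθ0 k hk]
      · intro k
        by_cases hk : k ∈ A
        · exact mul_le_mul_of_nonneg_left (hw k hk).2 (hθpos k hk).le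
        · simp [hθ0 k hk]
    have hPP01 : ∀ k ∈ A, ∀ (h g : G), 0 ≤ piv μ (n - (k:ℤ)) h * P k h g
        ∧ piv μ (n - (k:ℤ)) h * P k h g ≤ 1 := by
      intro k hk h g
      constructor
      · exact mul_nonneg (piv_nonneg _ h) (hPnn k hk h g)
      · calc piv μ (n - (k:ℤ)) h * P k h g ≤ 1 * 1 :=
            mul_le_mul (piv_le_one _ h) (P_le_one hθpos hθ0 hPnn hProw hk h g)
              (hPnn k hk h g) zero_le_one
        _ = 1 := one_mul _
    have hS01 : ∀ k ∈ A, ∀ g, 0 ≤ ∑ h, piv μ (n - (k:ℤ)) h * P k h g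
        ∧ ∑ h, piv μ (n - (k:ℤ)) h * P k h g ≤ C := fun k hk g =>
      hsum01 _ (fun h => (hPP01 k hk h g).1) (fun h => (hPP01 k hk h g).2)
    -- `B m` bounds
    have hBnn : ∀ (f' : G → ℝ), (∀ j, 0 ≤ f' j) →
        0 ≤ ∑ i, (if i ∈ Rset A P then 0 else ∑ j, Qpow P θ m i j * f' j) := by
      intro f' h0
      apply Finset.sum_nonneg
      intro i _
      split
      · exact le_rfl
      · exact Finset.sum_nonneg fun j _ =>
          mul_nonneg (Qpow_nonneg hθpos hθ0 hPnn hProw m i j) (h0 j)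
    have hBle : ∀ (f' : G → ℝ), (∀ j, 0 ≤ f' j) → (∀ j, f' j ≤ 1) →
        ∑ i, (if i ∈ Rset A P then 0 else ∑ j, Qpow P θ m i j * f' j) ≤ C := by
      intro f' h0 h1
      calc ∑ i, (if i ∈ Rset A P then 0 else ∑ j, Qpow P θ m i j * f' j)
          ≤ ∑ _i : G, (1:ℝ) := by
            apply Finset.sum_le_sum
            intro i _
            split
            · exact zero_le_one
            · have h2 : ∑ j, Qpow P θ m i j * f' j ≤ ∑ j, Qpow P θ m i j := by
                apply Finset.sum_le_sum
                intro j _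
                have := mul_le_mul_of_nonneg_left (h1 j)
                  (Qpow_nonneg hθpos hθ0 hPnn hProw m i j)
                rwa [mul_one] at this
              exact le_trans h2 (le_of_eq (Qpow_row hθpos hθ0 hθsum hPnn hProw m i))
        _ = C := by simp [hC]
    -- Step A : rewrite the LHS via the marginal recursion
    have stepA : ∑ g, piv μ n g * f g
        = ∑' k, θ k * ∑ h, piv μ (n - (k:ℤ)) h * Pf k h := by
      have h1 : ∑ g, piv μ n g * f g
          = ∑ g, ∑' k, (θ k * ∑ h, piv μ (n - (k:ℤ)) h * P k h g) * f g := by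
        apply Finset.sum_congr rfl
        intro g _
        rw [piv_rec hθpos hθ0 hθsum hPnn hProw hcomp n g, ← tsum_mul_right]
      rw [h1, ← Summable.tsum_finsetSum (fun g _ => by
        apply Summable.congr (hsummW (fun k => (∑ h, piv μ (n - (k:ℤ)) h * P k h g) * f g)
          (fun k hk => ⟨mul_nonneg (hS01 k hk g).1 (hf0 g),
            by
              calc (∑ h, piv μ (n - (k:ℤ)) h * P k h g) * f g
                  ≤ (∑ h, piv μ (n - (k:ℤ)) h * P k h g) * 1 :=
                    mul_le_mul_of_nonneg_left (hf1 g) (hS01 k hk g).1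
                _ = ∑ h, piv μ (n - (k:ℤ)) h * P k h g := mul_one _
                _ ≤ C := (hS01 k hk g).2⟩))
        intro k
        ring)]
      apply tsum_congr
      intro k
      calc ∑ g, (θ k * ∑ h, piv μ (n - (k:ℤ)) h * P k h g) * f g
          = ∑ g, θ k * ((∑ h, piv μ (n - (k:ℤ)) h * P k h g) * f g) := by
            apply Finset.sum_congr rfl
            intro g _
            ring
        _ = θ k * ∑ g, (∑ h, piv μ (n - (k:ℤ)) h * P k h g) * f g :=
            (Finset.mul_sum _ _ _).symm
        _ = θ k * ∑ h, piv μ (n - (k:ℤ)) h * Pf k h := by rw [sum_swap_mul]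
    -- Step B : apply the inductive hypothesis under the tsum
    have stepB : ∑' k, θ k * ∑ h, piv μ (n - (k:ℤ)) h * Pf k h
        ≤ ∑' k, θ k * ∑ i,
            (if i ∈ Rset A P then 0 else ∑ j, Qpow P θ m i j * Pf k j) := by
      apply Summable.tsum_le_tsum
      · intro k
        by_cases hk : k ∈ A
        · exact mul_le_mul_of_nonneg_left
            (ih (n - (k:ℤ)) (Pf k) (hPf0 k hk) (hPf1 k hk) (hPfR k hk))
            (theta_nonneg hθpos hθ0 k)
        · simp [hθ0 k hk]
      · apply hsummW
        intro k hk
        exact hsum01 _ (fun h => mul_nonneg (piv_nonneg _ h) (hPf0 k hk h))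
          (fun h => by
            calc piv μ (n - (k:ℤ)) h * Pf k h ≤ 1 * 1 :=
              mul_le_mul (piv_le_one _ h) (hPf1 k hk h) (hPf0 k hk h) zero_le_one
            _ = 1 := one_mul _)
      · apply hsummW
        intro k hk
        exact ⟨hBnn (Pf k) (hPf0 k hk), hBle (Pf k) (hPf0 k hk) (hPf1 k hk)⟩
    -- Step C : exchange the tsum with the finite sums and contract to `Q^(m+1)`
    have hQf : ∀ j, (∑' k, θ k * Pf k j) = ∑ g, Qmat P θ j g * f g := by
      intro j
      calc ∑' k, θ k * Pf k j
          = ∑' k, ∑ g, θ k * (P k j g * f g) := by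
            apply tsum_congr
            intro k
            rw [hPfdef]
            dsimp only
            rw [Finset.mul_sum]
        _ = ∑ g, ∑' k, θ k * (P k j g * f g) := by
            apply Summable.tsum_finsetSum
            intro g _
            apply summable_of_theta_bound hθpos hθ0 hθsum (C := 1)
            · intro k
              by_cases hk : k ∈ A
              · exact mul_nonneg (hθpos k hk).le
                  (mul_nonneg (hPnn k hk j g) (hf0 g))
              · simp [hθ0 k hk]
            · intro k
              by_cases hk : k ∈ A
              · apply mul_le_mul_of_nonneg_left _ (hθpos k hk).le
                calc P k j g * f g ≤ 1 * 1 :=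
                    mul_le_mul (P_le_one hθpos hθ0 hPnn hProw hk j g) (hf1 g)
                      (hf0 g) zero_le_one
                  _ = 1 := one_mul _
              · simp [hθ0 k hk]
        _ = ∑ g, (∑' k, θ k * P k j g) * f g := by
            apply Finset.sum_congr rfl
            intro g _
            rw [← tsum_mul_right]
            apply tsum_congr
            intro k
            ring
        _ = ∑ g, Qmat P θ j g * f g := rfl
    have hPf01 : ∀ k ∈ A, ∀ j, 0 ≤ Pf k j ∧ Pf k j ≤ 1 :=
      fun k hk j => ⟨hPf0 k hk j, hPf1 k hk j⟩
    have hinner_summ : ∀ i j : G, Summable (fun k => Qpow P θ m i j * (θ k * Pf k j)) := by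
      intro i j
      have h1 : Summable (fun k => θ k * Pf k j) := by
        apply hsummW
        intro k hk
        refine ⟨(hPf01 k hk j).1, le_trans (hPf01 k hk j).2 ?_⟩
        rw [hC]
        exact_mod_cast Nat.one_le_iff_ne_zero.mpr Fintype.card_ne_zero
      exact h1.mul_left _
    have stepC : ∑' k, θ k * ∑ i,
          (if i ∈ Rset A P then 0 else ∑ j, Qpow P θ m i j * Pf k j)
        = ∑ i, (if i ∈ Rset A P then 0 else ∑ j, Qpow P θ (m+1) i j * f j) := by
      calc ∑' k, θ k * ∑ i, (if i ∈ Rset A P then 0 else ∑ j, Qpow P θ m i j * Pf k j)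
          = ∑' k, ∑ i, (if i ∈ Rset A P then 0
              else ∑ j, Qpow P θ m i j * (θ k * Pf k j)) := by
            apply tsum_congr
            intro k
            rw [Finset.mul_sum]
            apply Finset.sum_congr rfl
            intro i _
            split
            · rw [mul_zero]
            · rw [Finset.mul_sum]
              apply Finset.sum_congr rfl
              intro j _
              ring
        _ = ∑ i, ∑' k, (if i ∈ Rset A P then 0
              else ∑ j, Qpow P θ m i j * (θ k * Pf k j)) := by
            apply Summable.tsum_finsetSum
            intro i _
            by_cases hiR : i ∈ Rset A P
            · simp only [if_pos hiR]
              exact summable_zero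
            · simp only [if_neg hiR]
              apply summable_sum
              intro j _
              exact hinner_summ i j
        _ = ∑ i, (if i ∈ Rset A P then 0
              else ∑ j, Qpow P θ m i j * (∑' k, θ k * Pf k j)) := by
            apply Finset.sum_congr rfl
            intro i _
            by_cases hiR : i ∈ Rset A P
            · simp only [if_pos hiR]
              exact tsum_zero
            · simp only [if_neg hiR]
              rw [Summable.tsum_finsetSum (fun j _ => hinner_summ i j)]
              apply Finset.sum_congr rfl
              intro j _
              rw [tsum_mul_left]
        _ = ∑ i, (if i ∈ Rset A P then 0 else ∑ j, Qpow P θ (m+1) i j * f j) := by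
            apply Finset.sum_congr rfl
            intro i _
            by_cases hiR : i ∈ Rset A P
            · simp only [if_pos hiR]
            · simp only [if_neg hiR]
              calc ∑ j, Qpow P θ m i j * (∑' k, θ k * Pf k j)
                  = ∑ j, Qpow P θ m i j * ∑ g, Qmat P θ j g * f g := by
                    apply Finset.sum_congr rfl
                    intro j _
                    rw [hQf j]
                _ = ∑ g, (∑ j, Qpow P θ m i j * Qmat P θ j g) * f g :=
                    (sum_swap_mul (Qpow P θ m i) f (Qmat P θ)).symm
                _ = ∑ j, Qpow P θ (m+1) i j * f j := rfl
    rw [stepA]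
    rw [← stepC]
    exact stepB


include hθpos hθ0 hθsum hPnn hProw in
lemma piv_zero_off_Rset [Nonempty G] [IsProbabilityMeasure μ] (hcomp : Compatible θ P μ)
    (hA : A.Nonempty) (n : ℤ) {g₀ : G} (hg : g₀ ∉ Rset A P) : μ {x | x n = g₀} = 0 := by
  classical
  set f : G → ℝ := fun g => if g ∈ Rset A P then 0 else 1 with hf
  have hf0 : ∀ g, 0 ≤ f g := by
    intro g; rw [hf]; dsimp only; split <;> norm_num
  have hf1 : ∀ g, f g ≤ 1 := by
    intro g; rw [hf]; dsimp only; split <;> norm_num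
  have hfR : ∀ g ∈ Rset A P, f g = 0 := by
    intro g hgR; rw [hf]; dsimp only; rw [if_pos hgR]
  have hle : ∀ ε : ℝ, 0 < ε → piv μ n g₀ ≤ ε := by
    intro ε hε
    set C : ℝ := (Fintype.card G : ℝ) with hC
    have hCpos : (0:ℝ) < C := by
      rw [hC]
      exact_mod_cast Fintype.card_pos
    obtain ⟨m, hm⟩ := tau_tendsto_zero (A := A) (P := P) hθpos hθ0 hθsum hPnn hProw hA
      (ε := ε / C) (div_pos hε hCpos)
    have h1 : piv μ n g₀ ≤ ∑ g, piv μ n g * f g := by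
      have h := Finset.single_le_sum (f := fun g => piv μ n g * f g)
        (fun g _ => mul_nonneg (piv_nonneg n g) (hf0 g)) (Finset.mem_univ g₀)
      have hfg : f g₀ = 1 := by rw [hf]; dsimp only; rw [if_neg hg]
      rw [hfg, mul_one] at h
      exact h
    have h2 := claim_bound hθpos hθ0 hθsum hPnn hProw hcomp m n f hf0 hf1 hfR
    have h3 : ∑ i, (if i ∈ Rset A P then 0 else ∑ j, Qpow P θ m i j * f j) ≤ ε := by
      have hτ : ∀ i, (∑ j, Qpow P θ m i j * f j) = tauQ (A := A) (P := P) (θ := θ) m i := by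
        intro i
        unfold tauQ
        apply Finset.sum_congr rfl
        intro j _
        by_cases hj : j ∈ Rset A P
        · rw [hf]; dsimp only; rw [if_pos hj, if_pos hj, mul_zero]
        · rw [hf]; dsimp only; rw [if_neg hj, if_neg hj, mul_one]
      calc ∑ i, (if i ∈ Rset A P then 0 else ∑ j, Qpow P θ m i j * f j)
          ≤ ∑ _i : G, ε / C := by
            apply Finset.sum_le_sum
            intro i _
            split
            · exact (div_pos hε hCpos).le
            · rw [hτ i]
              exact hm i
        _ = C * (ε / C) := by
            rw [Finset.sum_const, Finset.card_univ, nsmul_eq_mul, hC]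
        _ = ε := by field_simp
    linarith
  have hle0 : piv μ n g₀ ≤ 0 := by
    by_contra hcon
    push_neg at hcon
    have := hle (piv μ n g₀ / 2) (by linarith)
    linarith
  have h0 : piv μ n g₀ = 0 := le_antisymm hle0 (piv_nonneg n g₀)
  unfold piv at h0
  rcases (ENNReal.toReal_eq_zero_iff _).mp h0 with h | h
  · exact h
  · exact absurd h (measure_ne_top μ _)

end MeasurePart
end Det

/-- every compatible measure is supported by the trajectories
staying in the union `R` of all closed intercommunicating classes. -/
theorem stmt_3 {G : Type*} [Fintype G] [DecidableEq G] [Nonempty G]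
    [MeasurableSpace G] [MeasurableSingletonClass G]
    (A : Set ℕ) (hA : A.Nonempty) (hApos : ∀ k ∈ A, 0 < k)
    (θ : ℕ → ℝ) (hθpos : ∀ k ∈ A, 0 < θ k) (hθ0 : ∀ k, k ∉ A → θ k = 0)
    (hθsum : HasSum θ 1)
    (P : ℕ → G → G → ℝ)
    (hPnn : ∀ k ∈ A, ∀ i j : G, 0 ≤ P k i j)
    (hProw : ∀ k ∈ A, ∀ i : G, ∑ j, P k i j = 1)
    (μ : Measure (ℤ → G)) (hμ : IsProbabilityMeasure μ)
    (hcomp : Compatible θ P μ) :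
    μ {x : ℤ → G | ∀ n : ℤ,
      x n ∈ {j : G | ∃ C : Set G, IsInterClass A P C ∧ IsClosedClass A P C ∧ j ∈ C}} = 1 := by
  haveI := hμ
  have hnull : ∀ (n : ℤ) (g : G), g ∉ Rset A P → μ {x | x n = g} = 0 := fun n g hg =>
    piv_zero_off_Rset hθpos hθ0 hθsum hPnn hProw hcomp hA n hg
  have hmeasR : MeasurableSet {x : ℤ → G | ∀ n : ℤ, x n ∈ Rset A P} := by
    have heq : {x : ℤ → G | ∀ n : ℤ, x n ∈ Rset A P}
        = ⋂ n : ℤ, (fun x : ℤ → G => x n) ⁻¹' (Rset A P) := by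
      ext x
      simp [Set.mem_iInter]
    rw [heq]
    exact MeasurableSet.iInter fun n =>
      (measurable_pi_apply n) ((Set.to_countable _).measurableSet)
  show μ {x : ℤ → G | ∀ n : ℤ, x n ∈ Rset A P} = 1
  apply (prob_compl_eq_zero_iff hmeasR).mp
  have hcompl : {x : ℤ → G | ∀ n : ℤ, x n ∈ Rset A P}ᶜ
      ⊆ ⋃ n : ℤ, ⋃ g ∈ (Rset A P)ᶜ, {x : ℤ → G | x n = g} := by
    intro x hx
    simp only [Set.mem_compl_iff, Set.mem_setOf_eq, not_forall] at hx
    obtain ⟨n, hn⟩ := hx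
    exact Set.mem_iUnion.mpr ⟨n, Set.mem_biUnion hn rfl⟩
  apply measure_mono_null hcompl
  apply measure_iUnion_null
  intro n
  rw [measure_biUnion_null_iff (Set.to_countable _)]
  intro g hg
  exact hnull n g hg
end

section
/- For every imitation kernel p on a nonempty finite alphabet G, the set 𝒢(p) of compatible probability measures is nonempty. -/
open MeasureTheory
open scoped BigOperators

set_option linter.unusedSectionVars false

open MeasureTheory Filter Topology
open scoped ENNReal

section Kernel

variable {G : Type*} [Fintype G] [DecidableEq G] [MeasurableSpace G] [MeasurableSingletonClass G]
variable (θ : ℕ → ℝ) (P : ℕ → G → G → ℝ)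

/-- The imitation kernel value. -/
noncomputable def Kc (n : ℤ) (g : G) (x : ℤ → G) : ℝ :=
  ∑' k : ℕ, θ k * P k (x (n - (k : ℤ))) g

variable {θ P}

section

variable (hnn : ∀ k, 0 ≤ θ k)
  (hP : ∀ k, θ k ≠ 0 → 0 < k ∧ (∀ i j, 0 ≤ P k i j) ∧ (∀ i, ∑ j, P k i j = 1))

include hnn hP

lemma Kc_term_nonneg (k : ℕ) (i : G) (g : G) : 0 ≤ θ k * P k i g := by
  by_cases h : θ k = 0
  · simp [h]
  · exact mul_nonneg (hnn k) ((hP k h).2.1 i g)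

lemma Kc_term_le (k : ℕ) (i : G) (g : G) : θ k * P k i g ≤ θ k := by
  by_cases h : θ k = 0
  · simp [h]
  · have h1 : P k i g ≤ 1 := by
      have := (hP k h).2.2 i
      calc P k i g ≤ ∑ j, P k i j :=
        Finset.single_le_sum (fun j _ => (hP k h).2.1 i j) (Finset.mem_univ g)
      _ = 1 := this
    calc θ k * P k i g ≤ θ k * 1 := by
          apply mul_le_mul_of_nonneg_left h1 (hnn k)
      _ = θ k := mul_one _

variable (hsum : HasSum θ 1)
include hsum

lemma Kc_summable (n : ℤ) (g : G) (x : ℤ → G) :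
    Summable (fun k : ℕ => θ k * P k (x (n - (k : ℤ))) g) :=
  Summable.of_nonneg_of_le (fun k => Kc_term_nonneg hnn hP k _ g)
    (fun k => Kc_term_le hnn hP k _ g) hsum.summable

lemma Kc_nonneg (n : ℤ) (g : G) (x : ℤ → G) : 0 ≤ Kc θ P n g x :=
  tsum_nonneg (fun k => Kc_term_nonneg hnn hP k _ g)

lemma Kc_le_one (n : ℤ) (g : G) (x : ℤ → G) : Kc θ P n g x ≤ 1 := by
  have := Summable.tsum_le_tsum (fun k => Kc_term_le hnn hP k (x (n - (k:ℤ))) g)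
    (Kc_summable hnn hP hsum n g x) hsum.summable
  rw [hsum.tsum_eq] at this
  exact this

lemma Kc_sum_eq_one (n : ℤ) (x : ℤ → G) : ∑ g, Kc θ P n g x = 1 := by
  unfold Kc
  rw [← Summable.tsum_finsetSum (fun g _ => Kc_summable hnn hP hsum n g x)]
  have : ∀ k : ℕ, ∑ g, θ k * P k (x (n - (k:ℤ))) g = θ k := by
    intro k
    by_cases h : θ k = 0
    · simp [h]
    · rw [← Finset.mul_sum, (hP k h).2.2, mul_one]
  rw [tsum_congr this, hsum.tsum_eq]

end

lemma Kc_congr (hP : ∀ k, θ k ≠ 0 → 0 < k ∧ (∀ i j, 0 ≤ P k i j) ∧ (∀ i, ∑ j, P k i j = 1))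
    {n : ℤ} {x y : ℤ → G} (h : ∀ m, m < n → x m = y m) (g : G) :
    Kc θ P n g x = Kc θ P n g y := by
  refine tsum_congr fun k => ?_
  by_cases hk : θ k = 0
  · simp [hk]
  · have hk0 : 0 < k := (hP k hk).1
    rw [h (n - (k:ℤ)) (by omega)]

lemma Kc_measurable (hnn : ∀ k, 0 ≤ θ k)
    (hP : ∀ k, θ k ≠ 0 → 0 < k ∧ (∀ i j, 0 ≤ P k i j) ∧ (∀ i, ∑ j, P k i j = 1))
    (hsum : HasSum θ 1) (n : ℤ) (g : G) : Measurable (Kc θ P n g) := by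
  have hmeas : ∀ M : ℕ, Measurable (fun x : ℤ → G =>
      ∑ k ∈ Finset.range M, θ k * P k (x (n - (k:ℤ))) g) := by
    intro M
    refine Finset.measurable_sum _ fun k _ => ?_
    exact (measurable_of_countable (fun i : G => θ k * P k i g)).comp
      (measurable_pi_apply (n - (k:ℤ)))
  refine measurable_of_tendsto_metrizable hmeas ?_
  rw [tendsto_pi_nhds]
  exact fun x => ((Kc_summable hnn hP hsum n g x).hasSum).tendsto_sum_nat

end Kernel

section StepM

variable {G : Type*} [Fintype G] [DecidableEq G] [MeasurableSpace G] [MeasurableSingletonClass G]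
variable (θ : ℕ → ℝ) (P : ℕ → G → G → ℝ)

/-- One step of the construction: extend `μ` by drawing the coordinate at `pos`. -/
noncomputable def stepM (pos : ℤ) (μ : Measure (ℤ → G)) : Measure (ℤ → G) :=
  ∑ g : G, Measure.map (fun x => Function.update x pos g)
    (μ.withDensity (fun x => ENNReal.ofReal (Kc θ P pos g x)))

variable {θ P}
variable (hnn : ∀ k, 0 ≤ θ k)
  (hP : ∀ k, θ k ≠ 0 → 0 < k ∧ (∀ i j, 0 ≤ P k i j) ∧ (∀ i, ∑ j, P k i j = 1))
  (hsum : HasSum θ 1)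

include hnn hP hsum

lemma Ke_meas (n : ℤ) (g : G) :
    Measurable (fun x : ℤ → G => ENNReal.ofReal (Kc θ P n g x)) :=
  ENNReal.measurable_ofReal.comp (Kc_measurable hnn hP hsum n g)

lemma Ke_sum (pos : ℤ) (x : ℤ → G) :
    ∑ g : G, ENNReal.ofReal (Kc θ P pos g x) = 1 := by
  rw [← ENNReal.ofReal_sum_of_nonneg (fun g _ => Kc_nonneg hnn hP hsum pos g x),
    Kc_sum_eq_one hnn hP hsum, ENNReal.ofReal_one]

/-- Step doesn't change the measure of sets invariant under updating at `pos`. -/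
lemma stepM_apply_invariant (pos : ℤ) (μ : Measure (ℤ → G)) {S : Set (ℤ → G)}
    (hSm : MeasurableSet S) (hS : ∀ (x : ℤ → G) (g' : G), Function.update x pos g' ∈ S ↔ x ∈ S) :
    stepM θ P pos μ S = μ S := by
  rw [stepM, Measure.finset_sum_apply]
  have : ∀ g : G, (Measure.map (fun x => Function.update x pos g)
      (μ.withDensity (fun x => ENNReal.ofReal (Kc θ P pos g x)))) S
      = ∫⁻ x in S, ENNReal.ofReal (Kc θ P pos g x) ∂μ := by
    intro g
    rw [Measure.map_apply measurable_update_left hSm]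
    have hpre : (fun x : ℤ → G => Function.update x pos g) ⁻¹' S = S := by
      ext x; exact hS x g
    rw [hpre, withDensity_apply _ hSm]
  simp_rw [this]
  rw [← lintegral_finset_sum _ (fun g _ => Ke_meas hnn hP hsum pos g)]
  simp_rw [Ke_sum hnn hP hsum pos]
  exact setLIntegral_one S

lemma stepM_lintegral_invariant (pos : ℤ) (μ : Measure (ℤ → G)) {f : (ℤ → G) → ℝ≥0∞}
    (hfm : Measurable f) (hf : ∀ (x : ℤ → G) (g' : G), f (Function.update x pos g') = f x) :
    ∫⁻ x, f x ∂(stepM θ P pos μ) = ∫⁻ x, f x ∂μ := by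
  rw [stepM, lintegral_finset_sum_measure]
  have : ∀ g : G, ∫⁻ x, f x ∂(Measure.map (fun x => Function.update x pos g)
      (μ.withDensity (fun x => ENNReal.ofReal (Kc θ P pos g x))))
      = ∫⁻ x, ENNReal.ofReal (Kc θ P pos g x) * f x ∂μ := by
    intro g
    rw [lintegral_map hfm measurable_update_left]
    simp_rw [hf]
    rw [lintegral_withDensity_eq_lintegral_mul _ (Ke_meas hnn hP hsum pos g) hfm]
    rfl
  simp_rw [this]
  rw [← lintegral_finset_sum _ (f := fun g x => ENNReal.ofReal (Kc θ P pos g x) * f x) (fun g _ =>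
    ((Ke_meas hnn hP hsum pos g).mul hfm))]
  congr 1
  ext x
  rw [← Finset.sum_mul, Ke_sum hnn hP hsum pos, one_mul]

lemma stepM_apply_filled (pos : ℤ) (μ : Measure (ℤ → G)) {S : Set (ℤ → G)}
    (hSm : MeasurableSet S) (hS : ∀ (x : ℤ → G) (g' : G), Function.update x pos g' ∈ S ↔ x ∈ S)
    (g : G) :
    stepM θ P pos μ (S ∩ {x | x pos = g}) = ∫⁻ x in S, ENNReal.ofReal (Kc θ P pos g x) ∂μ := by
  have hg : MeasurableSet {x : ℤ → G | x pos = g} := by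
    have := measurable_pi_apply (X := fun _ : ℤ => G) pos (measurableSet_singleton g)
    exact this
  have hSm' : MeasurableSet (S ∩ {x : ℤ → G | x pos = g}) := hSm.inter hg
  rw [stepM, Measure.finset_sum_apply]
  have key : ∀ g' : G, (Measure.map (fun x => Function.update x pos g')
      (μ.withDensity (fun x => ENNReal.ofReal (Kc θ P pos g' x)))) (S ∩ {x | x pos = g})
      = if g' = g then ∫⁻ x in S, ENNReal.ofReal (Kc θ P pos g x) ∂μ else 0 := by
    intro g'
    rw [Measure.map_apply measurable_update_left hSm']
    have hpre : (fun x : ℤ → G => Function.update x pos g') ⁻¹' (S ∩ {x | x pos = g})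
        = if g' = g then S else ∅ := by
      ext x
      simp only [Set.mem_preimage, Set.mem_inter_iff, Set.mem_setOf_eq,
        Function.update_self, hS x g']
      by_cases h : g' = g <;> simp [h]
    rw [hpre]
    by_cases h : g' = g
    · simp only [h, if_true]
      rw [withDensity_apply _ hSm]
    · simp [h]
  simp_rw [key]
  rw [Finset.sum_ite_eq' Finset.univ g]
  simp

lemma stepM_isProbability (pos : ℤ) (μ : Measure (ℤ → G)) [IsProbabilityMeasure μ] :
    IsProbabilityMeasure (stepM θ P pos μ) := by
  constructor
  rw [stepM_apply_invariant hnn hP hsum pos μ MeasurableSet.univ (by simp)]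
  exact measure_univ

end StepM

section MuSeq

variable {G : Type*} [Fintype G] [DecidableEq G] [MeasurableSpace G] [MeasurableSingletonClass G]
variable (θ : ℕ → ℝ) (P : ℕ → G → G → ℝ)

/-- The finite-window approximating measures. -/
noncomputable def muSeq (z : G) (N : ℕ) : ℕ → Measure (ℤ → G)
  | 0 => Measure.dirac (fun _ => z)
  | (t+1) => stepM θ P ((t : ℤ) + 1 - (N : ℤ)) (muSeq z N t)

variable {θ P}
variable (hnn : ∀ k, 0 ≤ θ k)
  (hP : ∀ k, θ k ≠ 0 → 0 < k ∧ (∀ i j, 0 ≤ P k i j) ∧ (∀ i, ∑ j, P k i j = 1))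
  (hsum : HasSum θ 1)

include hnn hP hsum

lemma muSeq_isProbability (z : G) (N : ℕ) (t : ℕ) :
    IsProbabilityMeasure (muSeq θ P z N t) := by
  induction t with
  | zero => exact Measure.dirac.isProbabilityMeasure
  | succ t ih => exact stepM_isProbability hnn hP hsum _ _

lemma muSeq_compat (z : G) (N : ℕ) (t : ℕ) (n : ℤ) (g : G) (E : Set (ℤ → G))
    (hEm : MeasurableSet E)
    (hE : ∀ x y : ℤ → G, (∀ m, m < n → x m = y m) → (x ∈ E ↔ y ∈ E))
    (h1 : 1 ≤ n + (N : ℤ)) (h2 : n + (N : ℤ) ≤ (t : ℤ)) :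
    muSeq θ P z N t (E ∩ {x | x n = g})
      = ∫⁻ x in E, ENNReal.ofReal (Kc θ P n g x) ∂(muSeq θ P z N t) := by
  induction t with
  | zero => exact absurd h2 (by push_cast; omega)
  | succ t ih =>
    set pos : ℤ := (t : ℤ) + 1 - (N : ℤ) with hpos
    have hposn : n ≤ pos := by push_cast at h2 ⊢; omega
    -- invariance of E under updates at pos
    have hEinv : ∀ (x : ℤ → G) (g' : G), Function.update x pos g' ∈ E ↔ x ∈ E := by
      intro x g'
      exact hE _ x (fun m hm => Function.update_of_ne (by omega) _ _)
    -- invariance of the integrand under updates at pos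
    have hKinv : ∀ (x : ℤ → G) (g' : G),
        Kc θ P n g (Function.update x pos g') = Kc θ P n g x := by
      intro x g'
      exact Kc_congr hP (fun m hm => Function.update_of_ne (by omega) _ _) g
    have hfm : Measurable (E.indicator (fun x => ENNReal.ofReal (Kc θ P n g x))) :=
      (Ke_meas hnn hP hsum n g).indicator hEm
    have hRHS : ∫⁻ x in E, ENNReal.ofReal (Kc θ P n g x) ∂(muSeq θ P z N (t+1))
        = ∫⁻ x in E, ENNReal.ofReal (Kc θ P n g x) ∂(muSeq θ P z N t) := by
      rw [← lintegral_indicator hEm, ← lintegral_indicator hEm]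
      show ∫⁻ x, E.indicator (fun x => ENNReal.ofReal (Kc θ P n g x)) x
          ∂(stepM θ P pos (muSeq θ P z N t)) = _
      rw [stepM_lintegral_invariant hnn hP hsum pos _ hfm]
      intro x g'
      by_cases hx : x ∈ E
      · rw [Set.indicator_of_mem hx, Set.indicator_of_mem ((hEinv x g').mpr hx), hKinv]
      · rw [Set.indicator_of_notMem hx,
          Set.indicator_of_notMem (fun hc => hx ((hEinv x g').mp hc))]
    by_cases hcase : n = pos
    · -- the step that fills coordinate n
      rw [hRHS]
      show stepM θ P pos (muSeq θ P z N t) (E ∩ {x | x n = g}) = _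
      have hEinv2 : ∀ (x : ℤ → G) (g' : G), Function.update x n g' ∈ E ↔ x ∈ E := by
        rw [hcase]; exact hEinv
      rw [← hcase]
      exact stepM_apply_filled hnn hP hsum n _ hEm hEinv2 g
    · have hposgt : n < pos := lt_of_le_of_ne hposn hcase
      have h2' : n + (N : ℤ) ≤ (t : ℤ) := by push_cast at h2 ⊢; omega
      rw [hRHS, ← ih h2']
      show stepM θ P pos (muSeq θ P z N t) (E ∩ {x | x n = g}) = _
      have hg : MeasurableSet {x : ℤ → G | x n = g} := by
        have := measurable_pi_apply (X := fun _ : ℤ => G) n (measurableSet_singleton g)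
        exact this
      refine stepM_apply_invariant hnn hP hsum pos _ (hEm.inter hg) ?_
      intro x g'
      constructor
      · rintro ⟨h1', h2''⟩
        refine ⟨(hEinv x g').mp h1', ?_⟩
        simpa [Function.update_of_ne (show n ≠ pos from hcase)] using h2''
      · rintro ⟨h1', h2''⟩
        refine ⟨(hEinv x g').mpr h1', ?_⟩
        simpa [Function.update_of_ne (show n ≠ pos from hcase)] using h2''

end MuSeq

section Topol

variable {G : Type*} [Fintype G] [DecidableEq G] [MeasurableSpace G] [MeasurableSingletonClass G]
variable [TopologicalSpace G] [DiscreteTopology G]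

lemma measG (s : Set G) : MeasurableSet s := s.toFinite.measurableSet

/-- A cylinder set. -/
def cylSet (F : Finset ℤ) (c : ℤ → G) : Set (ℤ → G) := {x | ∀ m ∈ F, x m = c m}

lemma isClopen_cylSet (F : Finset ℤ) (c : ℤ → G) : IsClopen (cylSet F c) := by
  have : cylSet F c = ⋂ m ∈ F, (fun x : ℤ → G => x m) ⁻¹' {c m} := by
    ext x; simp [cylSet]
  rw [this]
  refine isClopen_biInter_finset fun m _ => ?_
  exact (isClopen_discrete {c m}).preimage (continuous_apply m)

lemma isClopen_coordEq (n : ℤ) (g : G) : IsClopen {x : ℤ → G | x n = g} := by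
  have : {x : ℤ → G | x n = g} = cylSet {n} (fun _ => g) := by
    ext x; simp [cylSet]
  rw [this]; exact isClopen_cylSet _ _

/-- Every clopen subset of the product space is measurable. -/
lemma isClopen_measurableSet {s : Set (ℤ → G)} (hs : IsClopen s) : MeasurableSet s := by
  obtain ⟨hscl, hsop⟩ := hs
  rw [isOpen_pi_iff] at hsop
  choose I u hu hsub using hsop
  haveI : CompactSpace (ℤ → G) := by
    haveI : CompactSpace G := Finite.compactSpace
    infer_instance
  have hcomp : IsCompact s := hscl.isCompact
  have hcover : s ⊆ ⋃ f : s, (↑(I f.1 f.2) : Set ℤ).pi (u f.1 f.2) := by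
    intro x hx
    exact Set.mem_iUnion.mpr ⟨⟨x, hx⟩, fun m hm => ((hu x hx) m hm).2⟩
  obtain ⟨T, hT⟩ := hcomp.elim_finite_subcover
    (fun f : s => (↑(I f.1 f.2) : Set ℤ).pi (u f.1 f.2))
    (fun f => isOpen_set_pi (Finset.finite_toSet _) (fun m hm => ((hu f.1 f.2) m hm).1))
    hcover
  have hs_eq : s = ⋃ f ∈ T, (↑(I f.1 f.2) : Set ℤ).pi (u f.1 f.2) := by
    apply Set.Subset.antisymm hT
    refine Set.iUnion₂_subset fun f _ => hsub f.1 f.2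
  rw [hs_eq]
  refine T.finite_toSet.measurableSet_biUnion fun f _ => ?_
  exact MeasurableSet.pi (Finset.countable_toSet _) (fun m _ => measG _)

lemma cylSet_measurableSet (F : Finset ℤ) (c : ℤ → G) : MeasurableSet (cylSet F c) :=
  isClopen_measurableSet (isClopen_cylSet F c)

lemma cylSet_past {F : Finset ℤ} {c : ℤ → G} {n : ℤ} (hF : ∀ m ∈ F, m < n) :
    ∀ x y : ℤ → G, (∀ m, m < n → x m = y m) → (x ∈ cylSet F c ↔ y ∈ cylSet F c) := by
  intro x y hxy
  constructor
  · intro hx m hm; rw [← hxy m (hF m hm)]; exact hx m hm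
  · intro hy m hm; rw [hxy m (hF m hm)]; exact hy m hm

end Topol

section Approx

variable {G : Type*} [Fintype G] [DecidableEq G] [MeasurableSpace G] [MeasurableSingletonClass G]
variable (θ : ℕ → ℝ) (P : ℕ → G → G → ℝ)

/-- Truncated kernel. -/
noncomputable def KM (M : ℕ) (n : ℤ) (g : G) (x : ℤ → G) : ℝ :=
  ∑ k ∈ Finset.range M, θ k * P k (x (n - (k : ℤ))) g

variable {θ P}
variable (hnn : ∀ k, 0 ≤ θ k)
  (hP : ∀ k, θ k ≠ 0 → 0 < k ∧ (∀ i j, 0 ≤ P k i j) ∧ (∀ i, ∑ j, P k i j = 1))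
  (hsum : HasSum θ 1)

include hnn hP hsum

lemma KM_nonneg (M : ℕ) (n : ℤ) (g : G) (x : ℤ → G) : 0 ≤ KM θ P M n g x :=
  Finset.sum_nonneg fun k _ => Kc_term_nonneg hnn hP k _ g

lemma KM_le_Kc (M : ℕ) (n : ℤ) (g : G) (x : ℤ → G) : KM θ P M n g x ≤ Kc θ P n g x :=
  Summable.sum_le_tsum _ (fun k _ => Kc_term_nonneg hnn hP k _ g) (Kc_summable hnn hP hsum n g x)

lemma KM_measurable (M : ℕ) (n : ℤ) (g : G) : Measurable (KM θ P M n g) := by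
  refine Finset.measurable_sum _ fun k _ => ?_
  exact (measurable_of_countable (fun i : G => θ k * P k i g)).comp
    (measurable_pi_apply (n - (k:ℤ)))

lemma Kc_sub_KM_le (M : ℕ) (n : ℤ) (g : G) (x : ℤ → G) :
    |Kc θ P n g x - KM θ P M n g x| ≤ 1 - ∑ k ∈ Finset.range M, θ k := by
  have hsummable := Kc_summable hnn hP hsum n g x
  have hsplit := Summable.sum_add_tsum_nat_add (f := fun k : ℕ => θ k * P k (x (n - (k:ℤ))) g) M hsummable
  have hdiff : Kc θ P n g x - KM θ P M n g x
      = ∑' j : ℕ, θ (j + M) * P (j + M) (x (n - ((j + M : ℕ) : ℤ))) g := by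
    unfold Kc KM; linarith [hsplit]
  have hθsplit := Summable.sum_add_tsum_nat_add (f := θ) M hsum.summable
  have htail_nonneg : 0 ≤ ∑' j : ℕ, θ (j + M) * P (j + M) (x (n - ((j + M : ℕ) : ℤ))) g :=
    tsum_nonneg fun j => Kc_term_nonneg hnn hP _ _ g
  have htail_le : ∑' j : ℕ, θ (j + M) * P (j + M) (x (n - ((j + M : ℕ) : ℤ))) g
      ≤ ∑' j : ℕ, θ (j + M) := by
    refine Summable.tsum_le_tsum (fun j => Kc_term_le hnn hP _ _ g) ?_ ?_
    · exact (summable_nat_add_iff M).mpr hsummable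
    · exact (summable_nat_add_iff M).mpr hsum.summable
  rw [hdiff, abs_of_nonneg htail_nonneg]
  have : ∑' j : ℕ, θ (j + M) = 1 - ∑ k ∈ Finset.range M, θ k := by
    rw [hsum.tsum_eq] at hθsplit; linarith
  linarith

lemma Kc_integrable (μ' : Measure (ℤ → G)) [IsFiniteMeasure μ'] :
    ∀ (n : ℤ) (g : G), Integrable (Kc θ P n g) μ' := by
  intro n g
  refine ⟨(Kc_measurable hnn hP hsum n g).aestronglyMeasurable, ?_⟩
  refine HasFiniteIntegral.of_bounded (C := 1) (Filter.Eventually.of_forall fun x => ?_)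
  rw [Real.norm_eq_abs, abs_of_nonneg (Kc_nonneg hnn hP hsum n g x)]
  exact Kc_le_one hnn hP hsum n g x

lemma KM_integrable (μ' : Measure (ℤ → G)) [IsFiniteMeasure μ'] :
    ∀ (M : ℕ) (n : ℤ) (g : G), Integrable (KM θ P M n g) μ' := by
  intro M n g
  refine ⟨(KM_measurable hnn hP hsum M n g).aestronglyMeasurable, ?_⟩
  refine HasFiniteIntegral.of_bounded (C := 1) (Filter.Eventually.of_forall fun x => ?_)
  rw [Real.norm_eq_abs, abs_of_nonneg (KM_nonneg hnn hP hsum M n g x)]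
  exact le_trans (KM_le_Kc hnn hP hsum M n g x) (Kc_le_one hnn hP hsum n g x)

/-- ε/3 bound: replacing the kernel by its truncation changes set integrals little. -/
lemma integral_Kc_sub_KM (μ' : Measure (ℤ → G)) [IsProbabilityMeasure μ'] (M : ℕ) (n : ℤ)
    (g : G) (E : Set (ℤ → G)) (hEm : MeasurableSet E) :
    |∫ x in E, Kc θ P n g x ∂μ' - ∫ x in E, KM θ P M n g x ∂μ'|
      ≤ 1 - ∑ k ∈ Finset.range M, θ k := by
  set δ := 1 - ∑ k ∈ Finset.range M, θ k with hδ
  have hδnn : 0 ≤ δ := by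
    have := sum_le_hasSum (Finset.range M) (fun k _ => hnn k) hsum
    simp only [hδ]; linarith
  have h1 : Integrable (Kc θ P n g) (μ'.restrict E) :=
    (Kc_integrable hnn hP hsum μ' n g).restrict
  have h2 : Integrable (KM θ P M n g) (μ'.restrict E) :=
    (KM_integrable hnn hP hsum μ' M n g).restrict
  rw [← integral_sub h1 h2]
  have hbound : ∀ x ∈ E, ‖Kc θ P n g x - KM θ P M n g x‖ ≤ δ := fun x _ =>
    Kc_sub_KM_le hnn hP hsum M n g x
  have := norm_setIntegral_le_of_norm_le_const (μ := μ') (s := E)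
    (measure_lt_top μ' E) hbound
  rw [Real.norm_eq_abs, measureReal_def] at this
  refine le_trans this ?_
  have hle1 : (μ' E).toReal ≤ 1 := by
    have := prob_le_one (μ := μ') (s := E)
    exact ENNReal.toReal_le_of_le_ofReal one_pos.le (by simpa using this)
  nlinarith

lemma lintegral_Ke_toReal (μ'' : Measure (ℤ → G)) [IsProbabilityMeasure μ''] (n : ℤ) (g : G)
    (E : Set (ℤ → G)) (hEm : MeasurableSet E) :
    (∫⁻ x in E, ENNReal.ofReal (Kc θ P n g x) ∂μ'').toReal = ∫ x in E, Kc θ P n g x ∂μ''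
    ∧ ∫⁻ x in E, ENNReal.ofReal (Kc θ P n g x) ∂μ'' ≤ 1 := by
  constructor
  · rw [integral_eq_lintegral_of_nonneg_ae
      (Filter.Eventually.of_forall fun x => Kc_nonneg hnn hP hsum n g x)
      ((Kc_measurable hnn hP hsum n g).aestronglyMeasurable)]
  · calc ∫⁻ x in E, ENNReal.ofReal (Kc θ P n g x) ∂μ''
        ≤ ∫⁻ _ in E, 1 ∂μ'' := by
          refine lintegral_mono fun x => ?_
          exact ENNReal.ofReal_le_one.mpr (Kc_le_one hnn hP hsum n g x)
      _ = μ'' E := setLIntegral_one E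
      _ ≤ 1 := prob_le_one

end Approx

section Decomp

variable {G : Type*} [Fintype G] [DecidableEq G] [MeasurableSpace G] [MeasurableSingletonClass G]
variable [TopologicalSpace G] [DiscreteTopology G]
variable {θ : ℕ → ℝ} {P : ℕ → G → G → ℝ}

/-- Extension of a configuration on a finite window by a default value. -/
noncomputable def extJ (J : Finset ℤ) (z : G) (v : {m : ℤ // m ∈ J} → G) : ℤ → G :=
  fun m => if h : m ∈ J then v ⟨m, h⟩ else z

lemma KM_decomp (hnn : ∀ k, 0 ≤ θ k)
    (hP : ∀ k, θ k ≠ 0 → 0 < k ∧ (∀ i j, 0 ≤ P k i j) ∧ (∀ i, ∑ j, P k i j = 1))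
    (hsum : HasSum θ 1)
    (μ' : Measure (ℤ → G)) [IsProbabilityMeasure μ'] (M : ℕ) (n : ℤ) (g : G) (z : G)
    (E : Set (ℤ → G)) (hEm : MeasurableSet E) :
    ∫ x in E, KM θ P M n g x ∂μ'
      = ∑ v : {m : ℤ // m ∈ Finset.Icc (n - (M:ℤ)) n} → G,
          KM θ P M n g (extJ _ z v)
            * (μ' (E ∩ cylSet (Finset.Icc (n - (M:ℤ)) n) (extJ _ z v))).toReal := by
  set J : Finset ℤ := Finset.Icc (n - (M:ℤ)) n with hJ
  have hmem : ∀ (x : ℤ → G) (k : ℕ), k ∈ Finset.range M → n - (k:ℤ) ∈ J := by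
    intro x k hk
    simp only [hJ, Finset.mem_Icc]
    have := Finset.mem_range.mp hk
    omega
  -- pointwise decomposition
  have key : ∀ x : ℤ → G, E.indicator (KM θ P M n g) x
      = ∑ v : {m : ℤ // m ∈ J} → G,
          (E ∩ cylSet J (extJ J z v)).indicator (fun _ => KM θ P M n g (extJ J z v)) x := by
    intro x
    set v₀ : {m : ℤ // m ∈ J} → G := fun m => x m.1 with hv₀
    rw [Finset.sum_eq_single v₀]
    · have hxcyl : x ∈ cylSet J (extJ J z v₀) := by
        intro m hm
        simp [extJ, hm, hv₀]
      have hKM : KM θ P M n g (extJ J z v₀) = KM θ P M n g x := by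
        unfold KM
        refine Finset.sum_congr rfl fun k hk => ?_
        have hmemk := hmem x k hk
        simp [extJ, hmemk, hv₀]
      by_cases hx : x ∈ E
      · rw [Set.indicator_of_mem hx, Set.indicator_of_mem (Set.mem_inter hx hxcyl), hKM]
      · rw [Set.indicator_of_notMem hx, Set.indicator_of_notMem (fun hc => hx hc.1)]
    · intro v _ hv
      refine Set.indicator_of_notMem (fun hc => hv ?_) _
      funext m
      have := hc.2 m.1 m.2
      simp only [extJ, m.2, dif_pos] at this
      simp [hv₀, this]
    · intro hv₀mem
      exact absurd (Finset.mem_univ v₀) hv₀mem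
  rw [← integral_indicator hEm]
  calc ∫ x, E.indicator (KM θ P M n g) x ∂μ'
      = ∫ x, (∑ v : {m : ℤ // m ∈ J} → G,
          (E ∩ cylSet J (extJ J z v)).indicator (fun _ => KM θ P M n g (extJ J z v)) x) ∂μ' := by
        exact integral_congr_ae (Filter.Eventually.of_forall key)
    _ = ∑ v : {m : ℤ // m ∈ J} → G, ∫ x,
          (E ∩ cylSet J (extJ J z v)).indicator (fun _ => KM θ P M n g (extJ J z v)) x ∂μ' := by
        refine integral_finset_sum _ fun v _ => ?_
        exact (integrable_const _).indicator (hEm.inter (cylSet_measurableSet J _))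
    _ = ∑ v : {m : ℤ // m ∈ J} → G,
          KM θ P M n g (extJ J z v) * (μ' (E ∩ cylSet J (extJ J z v))).toReal := by
        refine Finset.sum_congr rfl fun v _ => ?_
        rw [integral_indicator_const _ (hEm.inter (cylSet_measurableSet J _))]
        rw [smul_eq_mul, mul_comm, measureReal_def]

end Decomp

section LimitMeasure

variable {G : Type*} [Fintype G] [DecidableEq G] [MeasurableSpace G] [MeasurableSingletonClass G]
variable [TopologicalSpace G] [DiscreteTopology G]

lemma exists_limit_measure (μseq : ℕ → Measure (ℤ → G))
    (hprob : ∀ N, IsProbabilityMeasure (μseq N)) (𝒰 : Ultrafilter ℕ)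
    (Λ : Set (ℤ → G) → ℝ≥0∞)
    (hΛ : ∀ s, Filter.Tendsto (fun N => μseq N s) (𝒰 : Filter ℕ) (𝓝 (Λ s))) :
    ∃ μ : Measure (ℤ → G), IsProbabilityMeasure μ ∧ ∀ s, IsClopen s → μ s = Λ s := by
  classical
  haveI : CompactSpace G := Finite.compactSpace
  haveI : CompactSpace (ℤ → G) := by infer_instance
  -- properties of the limit content
  have hΛle : ∀ s, Λ s ≤ 1 := fun s =>
    le_of_tendsto (hΛ s) (Filter.Eventually.of_forall fun N => by
      haveI := hprob N; exact prob_le_one)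
  have hΛempty : Λ ∅ = 0 := by
    refine tendsto_nhds_unique (hΛ ∅) ?_
    simpa using tendsto_const_nhds (x := (0 : ℝ≥0∞)) (f := (𝒰 : Filter ℕ))
  have hΛuniv : Λ Set.univ = 1 := by
    refine tendsto_nhds_unique (hΛ Set.univ) ?_
    have : ∀ N, μseq N Set.univ = 1 := fun N => (hprob N).measure_univ
    simp_rw [this]
    exact tendsto_const_nhds
  have hΛadd : ∀ s t : Set (ℤ → G), Disjoint s t → MeasurableSet t → Λ (s ∪ t) = Λ s + Λ t := by
    intro s t hd ht
    refine tendsto_nhds_unique (hΛ (s ∪ t)) ?_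
    have : ∀ N, μseq N (s ∪ t) = μseq N s + μseq N t := fun N => measure_union hd ht
    simp_rw [this]
    exact Filter.Tendsto.add (hΛ s) (hΛ t)
  have hΛsubadd : ∀ (s : Set (ℤ → G)) (t : ℕ → Set (ℤ → G)) (I : Finset ℕ),
      s ⊆ ⋃ i ∈ I, t i → Λ s ≤ ∑ i ∈ I, Λ (t i) := by
    intro s t I hsub
    refine le_of_tendsto_of_tendsto' (hΛ s) (tendsto_finset_sum I fun i _ => hΛ (t i)) ?_
    intro N
    exact (measure_mono hsub).trans (measure_biUnion_finset_le _ _)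
  -- the outer measure
  set m' : Set (ℤ → G) → ℝ≥0∞ := fun s => if IsClopen s then Λ s else ⊤ with hm'
  have hm'empty : m' ∅ = 0 := by rw [hm']; simp [isClopen_empty, hΛempty]
  set OM := MeasureTheory.OuterMeasure.ofFunction m' hm'empty with hOM
  have hOMclopen : ∀ s, IsClopen s → OM s = Λ s := by
    intro s hs
    refine le_antisymm ((MeasureTheory.OuterMeasure.ofFunction_le s).trans_eq (if_pos hs)) ?_
    rw [hOM, MeasureTheory.OuterMeasure.ofFunction_eq_iInf_mem m' hm'empty
      (P := IsClopen) (fun u hu => if_neg hu) s]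
    refine le_iInf fun t => le_iInf fun hPt => le_iInf fun hsub => ?_
    obtain ⟨I, hI⟩ := (hs.isClosed.isCompact).elim_finite_subcover t
      (fun i => (hPt i).isOpen) hsub
    calc Λ s ≤ ∑ i ∈ I, Λ (t i) := hΛsubadd s t I hI
      _ = ∑ i ∈ I, m' (t i) := by
          refine Finset.sum_congr rfl fun i _ => ?_
          rw [hm']; simp [hPt i]
      _ ≤ ∑' i, m' (t i) := ENNReal.sum_le_tsum I
  have hCar : ∀ s, IsClopen s → MeasurableSet[OM.caratheodory] s := by
    intro s hs
    refine MeasureTheory.OuterMeasure.ofFunction_caratheodory fun t => ?_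
    by_cases ht : IsClopen t
    · have h1 : IsClopen (t ∩ s) := ht.inter hs
      have h2 : IsClopen (t \ s) := ht.inter hs.compl
      have hunion : (t ∩ s) ∪ (t \ s) = t := Set.inter_union_diff t s
      have hdisj : Disjoint (t ∩ s) (t \ s) :=
        Set.disjoint_sdiff_right.mono_left Set.inter_subset_right
      have := hΛadd (t ∩ s) (t \ s) hdisj (isClopen_measurableSet h2)
      rw [hunion] at this
      rw [hm']
      simp only [h1, h2, ht, if_pos]
      exact le_of_eq this.symm
    · have : m' t = ⊤ := if_neg ht
      rw [this]; exact le_top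
  have hle : (MeasurableSpace.pi : MeasurableSpace (ℤ → G)) ≤ OM.caratheodory := by
    have hpi : (MeasurableSpace.pi : MeasurableSpace (ℤ → G))
        = ⨆ m : ℤ, MeasurableSpace.comap (fun x : ℤ → G => x m) inferInstance := rfl
    rw [hpi]
    refine iSup_le fun m => ?_
    intro s hs
    obtain ⟨A, hA, rfl⟩ := hs
    exact hCar _ ((isClopen_discrete A).preimage (continuous_apply m))
  refine ⟨OM.toMeasure hle, ?_, ?_⟩
  · constructor
    rw [MeasureTheory.toMeasure_apply OM hle MeasurableSet.univ,
      hOMclopen _ isClopen_univ, hΛuniv]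
  · intro s hs
    rw [MeasureTheory.toMeasure_apply OM hle (isClopen_measurableSet hs), hOMclopen _ hs]

end LimitMeasure

section LimitCompat

variable {G : Type*} [Fintype G] [DecidableEq G] [MeasurableSpace G] [MeasurableSingletonClass G]
variable [TopologicalSpace G] [DiscreteTopology G]
variable {θ : ℕ → ℝ} {P : ℕ → G → G → ℝ}

lemma limit_cyl_compat
    (hnn : ∀ k, 0 ≤ θ k)
    (hP : ∀ k, θ k ≠ 0 → 0 < k ∧ (∀ i j, 0 ≤ P k i j) ∧ (∀ i, ∑ j, P k i j = 1))
    (hsum : HasSum θ 1) (z : G)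
    (μseq : ℕ → Measure (ℤ → G)) (hprob : ∀ N, IsProbabilityMeasure (μseq N))
    (𝒰 : Ultrafilter ℕ) (hU : (𝒰 : Filter ℕ) ≤ Filter.atTop)
    (Λ : Set (ℤ → G) → ℝ≥0∞)
    (hΛ : ∀ s, Filter.Tendsto (fun N => μseq N s) (𝒰 : Filter ℕ) (𝓝 (Λ s)))
    (μ : Measure (ℤ → G)) (hμprob : IsProbabilityMeasure μ)
    (hμclopen : ∀ s, IsClopen s → μ s = Λ s)
    (n : ℤ) (g : G) (F : Finset ℤ) (c : ℤ → G) (hF : ∀ m ∈ F, m < n)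
    (hcomp : ∀ᶠ N in Filter.atTop,
      μseq N (cylSet F c ∩ {x | x n = g})
        = ∫⁻ x in cylSet F c, ENNReal.ofReal (Kc θ P n g x) ∂(μseq N)) :
    μ (cylSet F c ∩ {x | x n = g})
      = ∫⁻ x in cylSet F c, ENNReal.ofReal (Kc θ P n g x) ∂μ := by
  set E := cylSet F c with hE
  have hEm : MeasurableSet E := cylSet_measurableSet F c
  have hEclopen : IsClopen E := isClopen_cylSet F c
  have hSclopen : IsClopen (E ∩ {x : ℤ → G | x n = g}) :=
    hEclopen.inter (isClopen_coordEq n g)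
  have hSm : MeasurableSet (E ∩ {x : ℤ → G | x n = g}) := isClopen_measurableSet hSclopen
  -- Tendsto of the left side
  have hLHS : Filter.Tendsto (fun N => μseq N (E ∩ {x | x n = g})) (𝒰 : Filter ℕ)
      (𝓝 (Λ (E ∩ {x | x n = g}))) := hΛ _
  -- Convergence of the truncated integrals, for every M
  have hKMconv : ∀ M : ℕ, Filter.Tendsto (fun N => ∫ x in E, KM θ P M n g x ∂(μseq N))
      (𝒰 : Filter ℕ) (𝓝 (∫ x in E, KM θ P M n g x ∂μ)) := by
    intro M
    have hrw : ∀ (μ' : Measure (ℤ → G)) (_ : IsProbabilityMeasure μ'),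
        ∫ x in E, KM θ P M n g x ∂μ'
          = ∑ v : {m : ℤ // m ∈ Finset.Icc (n - (M:ℤ)) n} → G,
              KM θ P M n g (extJ _ z v)
                * (μ' (E ∩ cylSet (Finset.Icc (n - (M:ℤ)) n) (extJ _ z v))).toReal := by
      intro μ' h'
      exact KM_decomp hnn hP hsum μ' M n g z E hEm
    rw [hrw μ hμprob]
    have := fun N => hrw (μseq N) (hprob N)
    simp_rw [this]
    refine tendsto_finset_sum _ fun v _ => ?_
    set S := E ∩ cylSet (Finset.Icc (n - (M:ℤ)) n) (extJ _ z v) with hS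
    have hSclopen' : IsClopen S := hEclopen.inter (isClopen_cylSet _ _)
    have hfin : Λ S ≠ ⊤ := by
      refine ne_top_of_le_ne_top ENNReal.one_ne_top ?_
      exact le_of_tendsto (hΛ S) (Filter.Eventually.of_forall fun N => by
        haveI := hprob N; exact prob_le_one)
    have h1 : Filter.Tendsto (fun N => (μseq N S).toReal) (𝒰 : Filter ℕ)
        (𝓝 ((Λ S).toReal)) := (ENNReal.tendsto_toReal hfin).comp (hΛ S)
    rw [hμclopen S hSclopen']
    exact h1.const_mul _
  -- Convergence of the full kernel integrals
  have hRHSconv : Filter.Tendsto (fun N => ∫ x in E, Kc θ P n g x ∂(μseq N))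
      (𝒰 : Filter ℕ) (𝓝 (∫ x in E, Kc θ P n g x ∂μ)) := by
    rw [Metric.tendsto_nhds]
    intro ε hε
    have hδ : Filter.Tendsto (fun M => 1 - ∑ k ∈ Finset.range M, θ k) Filter.atTop (𝓝 0) := by
      have := hsum.tendsto_sum_nat
      have h' := this.const_sub 1
      simpa using h'
    obtain ⟨M, hM⟩ := (hδ.eventually_lt_const (show (0:ℝ) < ε/3 by linarith)).exists
    have hmid := (Metric.tendsto_nhds.mp (hKMconv M)) (ε/3) (by linarith)
    refine hmid.mono fun N hN => ?_
    haveI := hprob N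
    have h1 := integral_Kc_sub_KM hnn hP hsum (μseq N) M n g E hEm
    have h2 := integral_Kc_sub_KM hnn hP hsum μ M n g E hEm
    rw [Real.dist_eq] at hN ⊢
    have t1 : |∫ x in E, Kc θ P n g x ∂(μseq N) - ∫ x in E, Kc θ P n g x ∂μ|
        ≤ |∫ x in E, Kc θ P n g x ∂(μseq N) - ∫ x in E, KM θ P M n g x ∂(μseq N)|
          + |∫ x in E, KM θ P M n g x ∂(μseq N) - ∫ x in E, Kc θ P n g x ∂μ| :=
      abs_sub_le _ _ _
    have t2 : |∫ x in E, KM θ P M n g x ∂(μseq N) - ∫ x in E, Kc θ P n g x ∂μ|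
        ≤ |∫ x in E, KM θ P M n g x ∂(μseq N) - ∫ x in E, KM θ P M n g x ∂μ|
          + |∫ x in E, KM θ P M n g x ∂μ - ∫ x in E, Kc θ P n g x ∂μ| :=
      abs_sub_le _ _ _
    have h2' : |∫ x in E, KM θ P M n g x ∂μ - ∫ x in E, Kc θ P n g x ∂μ|
        = |∫ x in E, Kc θ P n g x ∂μ - ∫ x in E, KM θ P M n g x ∂μ| := abs_sub_comm _ _
    linarith
  -- identify the limits
  have hae : ∀ᶠ N in (𝒰 : Filter ℕ), (μseq N (E ∩ {x | x n = g})).toReal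
      = ∫ x in E, Kc θ P n g x ∂(μseq N) := by
    refine (hcomp.filter_mono hU).mono fun N hN => ?_
    haveI := hprob N
    rw [hN, (lintegral_Ke_toReal hnn hP hsum (μseq N) n g E hEm).1]
  have hLHS' : Filter.Tendsto (fun N => (μseq N (E ∩ {x | x n = g})).toReal)
      (𝒰 : Filter ℕ) (𝓝 ((Λ (E ∩ {x | x n = g})).toReal)) := by
    have hfin : Λ (E ∩ {x | x n = g}) ≠ ⊤ := by
      refine ne_top_of_le_ne_top ENNReal.one_ne_top ?_
      exact le_of_tendsto (hΛ _) (Filter.Eventually.of_forall fun N => by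
        haveI := hprob N; exact prob_le_one)
    exact (ENNReal.tendsto_toReal hfin).comp hLHS
  have hmain : (Λ (E ∩ {x | x n = g})).toReal = ∫ x in E, Kc θ P n g x ∂μ :=
    tendsto_nhds_unique (Filter.Tendsto.congr' hae hLHS') hRHSconv
  -- back to ENNReal
  have hend := lintegral_Ke_toReal hnn hP hsum μ n g E hEm
  rw [hμclopen _ hSclopen]
  have hfinL : Λ (E ∩ {x | x n = g}) ≠ ⊤ := by
    refine ne_top_of_le_ne_top ENNReal.one_ne_top ?_
    exact le_of_tendsto (hΛ _) (Filter.Eventually.of_forall fun N => by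
      haveI := hprob N; exact prob_le_one)
  have hfinR : (∫⁻ x in E, ENNReal.ofReal (Kc θ P n g x) ∂μ) ≠ ⊤ :=
    ne_top_of_le_ne_top ENNReal.one_ne_top hend.2
  rw [← ENNReal.toReal_eq_toReal_iff' hfinL hfinR]
  rw [hmain, hend.1]

end LimitCompat

section Final

variable {G : Type*} [Fintype G] [DecidableEq G] [MeasurableSpace G] [MeasurableSingletonClass G]

theorem stmt_12' [Nonempty G]
    (A : Set ℕ) (hA : A.Nonempty) (hApos : ∀ k ∈ A, 0 < k)
    (θ : ℕ → ℝ) (hθpos : ∀ k ∈ A, 0 < θ k) (hθ0 : ∀ k, k ∉ A → θ k = 0)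
    (hθsum : HasSum θ 1)
    (P : ℕ → G → G → ℝ)
    (hPnn : ∀ k ∈ A, ∀ i j : G, 0 ≤ P k i j)
    (hProw : ∀ k ∈ A, ∀ i : G, ∑ j, P k i j = 1) :
    ∃ μ : Measure (ℤ → G), IsProbabilityMeasure μ ∧
      ∀ (n : ℤ) (g : G) (E : Set (ℤ → G)),
        MeasurableSet[MeasurableSpace.comap
          (fun x : ℤ → G => fun m : {m : ℤ // m < n} => x m.1) MeasurableSpace.pi] E →
        (μ (E ∩ {x | x n = g})).toReal
          = ∫ x in E, (∑' k : ℕ, θ k * P k (x (n - (k : ℤ))) g) ∂μ := by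
  classical
  letI : TopologicalSpace G := ⊥
  haveI : DiscreteTopology G := ⟨rfl⟩
  have hnn : ∀ k, 0 ≤ θ k := by
    intro k
    by_cases h : k ∈ A
    · exact (hθpos k h).le
    · rw [hθ0 k h]
  have hP' : ∀ k, θ k ≠ 0 → 0 < k ∧ (∀ i j, 0 ≤ P k i j) ∧ (∀ i, ∑ j, P k i j = 1) := by
    intro k hk
    have hkA : k ∈ A := by by_contra h; exact hk (hθ0 k h)
    exact ⟨hApos k hkA, hPnn k hkA, hProw k hkA⟩
  let z : G := Classical.arbitrary G
  set μseq : ℕ → Measure (ℤ → G) := fun N => muSeq θ P z N (2*N) with hμseq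
  have hprob : ∀ N, IsProbabilityMeasure (μseq N) := fun N =>
    muSeq_isProbability hnn hP' hθsum z N (2*N)
  let 𝒰 : Ultrafilter ℕ := Ultrafilter.of Filter.atTop
  have hU : (𝒰 : Filter ℕ) ≤ Filter.atTop := Ultrafilter.of_le _
  have hlim : ∀ s : Set (ℤ → G), ∃ L : ℝ≥0∞,
      Filter.Tendsto (fun N => μseq N s) (𝒰 : Filter ℕ) (𝓝 L) := by
    intro s
    obtain ⟨L, -, hL⟩ := (isCompact_univ (X := ℝ≥0∞)).ultrafilter_le_nhds
      (𝒰.map fun N => μseq N s) (by simp)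
    refine ⟨L, ?_⟩
    rw [Filter.Tendsto, ← Ultrafilter.coe_map]
    exact hL
  choose Λ hΛ using hlim
  obtain ⟨μ, hμprob, hμclopen⟩ := exists_limit_measure μseq hprob 𝒰 Λ hΛ
  refine ⟨μ, hμprob, ?_⟩
  intro n g E hE
  -- the restriction map and its σ-algebra
  set f : (ℤ → G) → ({m : ℤ // m < n} → G) :=
    (fun x : ℤ → G => fun m : {m : ℤ // m < n} => x m.1) with hf
  have hfmeas : Measurable f := measurable_pi_lambda _ fun m => measurable_pi_apply m.1
  have hcomaple : MeasurableSpace.comap f MeasurableSpace.pi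
      ≤ (inferInstance : MeasurableSpace (ℤ → G)) := hfmeas.comap_le
  -- per-cylinder compatibility for the limit measure
  have hcyl : ∀ (F : Finset ℤ) (c : ℤ → G), (∀ m ∈ F, m < n) →
      μ (cylSet F c ∩ {x | x n = g})
        = ∫⁻ x in cylSet F c, ENNReal.ofReal (Kc θ P n g x) ∂μ := by
    intro F c hF
    refine limit_cyl_compat hnn hP' hθsum z μseq hprob 𝒰 hU Λ hΛ μ hμprob hμclopen
      n g F c hF ?_
    refine Filter.eventually_atTop.mpr ⟨n.natAbs + 1, fun N hN => ?_⟩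
    have h1 : (n.natAbs : ℤ) < (N : ℤ) := by exact_mod_cast hN
    have h2 := Int.natAbs_eq n
    exact muSeq_compat hnn hP' hθsum z N (2*N) n g (cylSet F c)
      (cylSet_measurableSet F c) (cylSet_past hF)
      (by omega) (by push_cast; omega)
  -- the cylinder π-system
  set C : Set (Set (ℤ → G)) :=
    {S | ∃ (F : Finset ℤ) (c : ℤ → G), (∀ m ∈ F, m < n) ∧ S = cylSet F c} with hC
  have huniv_mem : Set.univ ∈ C := by
    refine ⟨∅, fun _ => g, by simp, ?_⟩
    ext x; simp [cylSet]
  have hgen : MeasurableSpace.comap f MeasurableSpace.pi = MeasurableSpace.generateFrom C := by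
    apply le_antisymm
    · have hpi : (MeasurableSpace.pi : MeasurableSpace ({m : ℤ // m < n} → G))
          = ⨆ i : {m : ℤ // m < n}, MeasurableSpace.comap (fun y => y i) inferInstance := rfl
      rw [hpi, MeasurableSpace.comap_iSup]
      refine iSup_le fun i => ?_
      rw [MeasurableSpace.comap_comp]
      intro s hs
      obtain ⟨B, hB, rfl⟩ := hs
      have hrw : ((fun y : {m : ℤ // m < n} → G => y i) ∘ f) ⁻¹' B
          = ⋃ g' ∈ B, cylSet {(i : ℤ)} (fun _ => g') := by
        ext x
        simp only [Set.mem_preimage, Function.comp_apply, Set.mem_iUnion, hf]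
        constructor
        · intro hx; exact ⟨x i.1, hx, by intro m hm; simp_all [cylSet, Finset.mem_singleton]⟩
        · rintro ⟨g', hg', hcyl'⟩
          have := hcyl' i.1 (Finset.mem_singleton_self _)
          rw [this]; exact hg'
      rw [hrw]
      refine MeasurableSet.biUnion (Set.to_countable B) fun g' _ => ?_
      exact MeasurableSpace.measurableSet_generateFrom
        ⟨{(i : ℤ)}, fun _ => g', by simpa using i.2, rfl⟩
    · refine MeasurableSpace.generateFrom_le fun S hS => ?_
      obtain ⟨F, c, hFlt, rfl⟩ := hS
      refine ⟨{y : {m : ℤ // m < n} → G | ∀ m (hm : m ∈ F), y ⟨m, hFlt m hm⟩ = c m}, ?_, ?_⟩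
      · have : {y : {m : ℤ // m < n} → G | ∀ m (hm : m ∈ F), y ⟨m, hFlt m hm⟩ = c m}
            = ⋂ (m : ℤ) (hm : m ∈ F), {y : {m' : ℤ // m' < n} → G | y ⟨m, hFlt m hm⟩ = c m} := by
          ext y; simp
        rw [this]
        refine MeasurableSet.iInter fun m => MeasurableSet.iInter fun hm => ?_
        have := measurable_pi_apply (X := fun _ : {m' : ℤ // m' < n} => G)
          ⟨m, hFlt m hm⟩ (measurableSet_singleton (c m))
        exact this
      · ext x; simp [cylSet, hf]
  have hpisys : IsPiSystem C := by
    rintro S1 ⟨F1, c1, hlt1, rfl⟩ S2 ⟨F2, c2, hlt2, rfl⟩ hne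
    obtain ⟨x₀, hx₀1, hx₀2⟩ := hne
    refine ⟨F1 ∪ F2, fun m => if m ∈ F1 then c1 m else c2 m, ?_, ?_⟩
    · intro m hm
      rcases Finset.mem_union.mp hm with h | h
      exacts [hlt1 m h, hlt2 m h]
    · ext x
      simp only [Set.mem_inter_iff, cylSet, Set.mem_setOf_eq, Finset.mem_union]
      constructor
      · rintro ⟨hx1, hx2⟩ m hm
        by_cases hmF1 : m ∈ F1
        · simp only [hmF1, if_true]
          exact hx1 m hmF1
        · simp only [hmF1, if_false]
          exact hx2 m (hm.resolve_left hmF1)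
      · intro hx
        constructor
        · intro m hm
          have := hx m (Or.inl hm)
          simpa only [hm, if_true] using this
        · intro m hm
          have := hx m (Or.inr hm)
          by_cases hmF1 : m ∈ F1
          · simp only [hmF1, if_true] at this
            rw [this, ← hx₀1 m hmF1]
            exact hx₀2 m hm
          · simpa only [hmF1, if_false] using this
  -- the two measures to compare
  set ν₁ : Measure (ℤ → G) := μ.restrict {x | x n = g} with hν₁
  set ν₂ : Measure (ℤ → G) := μ.withDensity (fun x => ENNReal.ofReal (Kc θ P n g x)) with hν₂
  haveI : IsFiniteMeasure ν₂ := by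
    constructor
    rw [hν₂, MeasureTheory.withDensity_apply _ MeasurableSet.univ]
    calc ∫⁻ x in Set.univ, ENNReal.ofReal (Kc θ P n g x) ∂μ ≤ 1 :=
          (lintegral_Ke_toReal hnn hP' hθsum μ n g Set.univ MeasurableSet.univ).2
      _ < ⊤ := ENNReal.one_lt_top
  have hbasic : ∀ S ∈ C, ν₁ S = ν₂ S := by
    rintro S ⟨F, c, hFlt, rfl⟩
    rw [hν₁, hν₂, Measure.restrict_apply (cylSet_measurableSet F c),
      MeasureTheory.withDensity_apply _ (cylSet_measurableSet F c)]
    exact hcyl F c hFlt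
  have key : ∀ S : Set (ℤ → G),
      MeasurableSet[MeasurableSpace.comap f MeasurableSpace.pi] S → ν₁ S = ν₂ S := by
    refine @MeasurableSpace.induction_on_inter (ℤ → G)
      (MeasurableSpace.comap f MeasurableSpace.pi) (fun S _ => ν₁ S = ν₂ S) C hgen hpisys ?_ hbasic ?_ ?_
    · simp
    · intro t htm ht
      have ht' : MeasurableSet t := hcomaple t htm
      have huniv : ν₁ Set.univ = ν₂ Set.univ := hbasic Set.univ huniv_mem
      rw [measure_compl ht' (measure_ne_top ν₁ t), measure_compl ht' (measure_ne_top ν₂ t),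
        huniv, ht]
    · intro fs hdisj hmeas hCs
      have hmeas' : ∀ i, MeasurableSet (fs i) := fun i => hcomaple _ (hmeas i)
      rw [measure_iUnion hdisj hmeas', measure_iUnion hdisj hmeas']
      exact tsum_congr hCs
  have hνeq := key E hE
  have hEamb : MeasurableSet E := hcomaple E hE
  have hfinal : μ (E ∩ {x | x n = g}) = ∫⁻ x in E, ENNReal.ofReal (Kc θ P n g x) ∂μ := by
    rw [← MeasureTheory.withDensity_apply _ hEamb, ← hν₂, ← hνeq, hν₁,
      Measure.restrict_apply hEamb]
  have hint : ∫ x in E, (∑' k : ℕ, θ k * P k (x (n - (k : ℤ))) g) ∂μ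
      = ∫ x in E, Kc θ P n g x ∂μ := rfl
  rw [hint, hfinal, (lintegral_Ke_toReal hnn hP' hθsum μ n g E hEamb).1]

end Final


/-- for every imitation kernel on a nonempty finite alphabet,
`𝒢(p)` is nonempty. -/
theorem stmt_12 {G : Type*} [Fintype G] [DecidableEq G] [Nonempty G]
    [MeasurableSpace G] [MeasurableSingletonClass G]
    (A : Set ℕ) (hA : A.Nonempty) (hApos : ∀ k ∈ A, 0 < k)
    (θ : ℕ → ℝ) (hθpos : ∀ k ∈ A, 0 < θ k) (hθ0 : ∀ k, k ∉ A → θ k = 0)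
    (hθsum : HasSum θ 1)
    (P : ℕ → G → G → ℝ)
    (hPnn : ∀ k ∈ A, ∀ i j : G, 0 ≤ P k i j)
    (hProw : ∀ k ∈ A, ∀ i : G, ∑ j, P k i j = 1) :
    ∃ μ : Measure (ℤ → G), IsProbabilityMeasure μ ∧ Compatible θ P μ := by
  obtain ⟨μ, hμ, hcomp⟩ := stmt_12' A hA hApos θ hθpos hθ0 hθsum P hPnn hProw
  exact ⟨μ, hμ, fun n g E hE => hcomp n g E hE⟩
end

section
/- If the set 𝒢(p) of probability measures compatible with the imitation kernel p consists of a single element μ, then μ is shift-invariant. -/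
open MeasureTheory
open scoped BigOperators

/-- if `𝒢(p)` consists of a single element `μ`, then `μ` is
shift-invariant. -/
theorem stmt_13 {G : Type*} [Fintype G] [DecidableEq G] [Nonempty G]
    [MeasurableSpace G] [MeasurableSingletonClass G]
    (A : Set ℕ) (hA : A.Nonempty) (hApos : ∀ k ∈ A, 0 < k)
    (θ : ℕ → ℝ) (hθpos : ∀ k ∈ A, 0 < θ k) (hθ0 : ∀ k, k ∉ A → θ k = 0)
    (hθsum : HasSum θ 1)
    (P : ℕ → G → G → ℝ)
    (hPnn : ∀ k ∈ A, ∀ i j : G, 0 ≤ P k i j)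
    (hProw : ∀ k ∈ A, ∀ i : G, ∑ j, P k i j = 1)
    (μ : Measure (ℤ → G)) (hμ : IsProbabilityMeasure μ) (hcomp : Compatible θ P μ)
    (huniq : ∀ ν : Measure (ℤ → G), IsProbabilityMeasure ν → Compatible θ P ν → ν = μ) :
    Measure.map (fun x : ℤ → G => fun n : ℤ => x (n + 1)) μ = μ := by
  set T : (ℤ → G) → (ℤ → G) := fun x n => x (n + 1) with hT
  have hTmeas : Measurable T :=
    measurable_pi_lambda _ fun n => measurable_pi_apply _
  have hmapprob : IsProbabilityMeasure (Measure.map T μ) :=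
    Measure.isProbabilityMeasure_map hTmeas.aemeasurable
  -- measurability of the integrand
  have hf : ∀ (n : ℤ) (g : G),
      Measurable (fun x : ℤ → G => ∑' k : ℕ, θ k * P k (x (n - (k : ℤ))) g) := by
    intro n g
    have hterm : ∀ k : ℕ, Measurable (fun x : ℤ → G => θ k * P k (x (n - (k : ℤ))) g) := by
      intro k
      exact (((measurable_of_countable (fun i : G => P k i g)).comp
        (measurable_pi_apply (n - (k : ℤ)))).const_mul (θ k))
    have hsummable : ∀ x : ℤ → G,
        Summable (fun k : ℕ => θ k * P k (x (n - (k : ℤ))) g) := by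
      intro x
      have hθsummable : Summable θ := hθsum.summable
      apply Summable.of_nonneg_of_le _ _ hθsummable
      · intro k
        by_cases hk : k ∈ A
        · exact mul_nonneg (hθpos k hk).le (hPnn k hk _ _)
        · simp [hθ0 k hk]
      · intro k
        by_cases hk : k ∈ A
        · have hP1 : P k (x (n - (k : ℤ))) g ≤ 1 := by
            have := hProw k hk (x (n - (k : ℤ)))
            calc P k (x (n - (k : ℤ))) g
                ≤ ∑ j, P k (x (n - (k : ℤ))) j :=
                  Finset.single_le_sum (fun j _ => hPnn k hk _ j) (Finset.mem_univ g)
              _ = 1 := this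
          calc θ k * P k (x (n - (k : ℤ))) g ≤ θ k * 1 :=
                mul_le_mul_of_nonneg_left hP1 (hθpos k hk).le
            _ = θ k := mul_one _
        · simp [hθ0 k hk]
    apply measurable_of_tendsto_metrizable
      (f := fun N x => ∑ k ∈ Finset.range N, θ k * P k (x (n - (k : ℤ))) g)
    · intro N
      exact Finset.measurable_sum _ fun k _ => hterm k
    · rw [tendsto_pi_nhds]
      intro x
      exact ((hsummable x).hasSum).tendsto_sum_nat
  have hcomp' : Compatible θ P (Measure.map T μ) := by
    intro n g E hE
    obtain ⟨s, hs, rfl⟩ := hE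
    set F : (ℤ → G) → ({m : ℤ // m < n} → G) :=
      fun x => fun m : {m : ℤ // m < n} => x m.1 with hF
    have hFmeas : Measurable F := measurable_pi_lambda _ fun m => measurable_pi_apply _
    have hEmeas : MeasurableSet (F ⁻¹' s) := hFmeas hs
    -- the pullback of E under T is past-measurable at n+1
    set R : ({m : ℤ // m < n + 1} → G) → ({m : ℤ // m < n} → G) :=
      fun y => fun m : {m : ℤ // m < n} => y ⟨m.1 + 1, by omega⟩ with hR
    have hRmeas : Measurable R := measurable_pi_lambda _ fun m => measurable_pi_apply _
    have hpre : T ⁻¹' (F ⁻¹' s)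
        = (fun x : ℤ → G => fun m : {m : ℤ // m < n + 1} => x m.1) ⁻¹' (R ⁻¹' s) := by
      rfl
    have hpast : PastMeasurable (n + 1) (T ⁻¹' (F ⁻¹' s)) := by
      rw [PastMeasurable, MeasurableSpace.measurableSet_comap]
      exact ⟨R ⁻¹' s, hRmeas hs, hpre.symm⟩
    -- left-hand side
    have hsetmeas : MeasurableSet ((F ⁻¹' s) ∩ {x : ℤ → G | x n = g}) := by
      refine hEmeas.inter ?_
      show MeasurableSet ((fun x : ℤ → G => x n) ⁻¹' {g})
      exact measurable_pi_apply n (measurableSet_singleton g)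
    have hLHS : Measure.map T μ ((F ⁻¹' s) ∩ {x : ℤ → G | x n = g})
        = μ ((T ⁻¹' (F ⁻¹' s)) ∩ {x : ℤ → G | x (n + 1) = g}) := by
      rw [Measure.map_apply hTmeas hsetmeas]
      congr 1
    rw [hLHS]
    have hstep := hcomp (n + 1) g (T ⁻¹' (F ⁻¹' s)) hpast
    rw [hstep]
    -- right-hand side: change of variables
    rw [setIntegral_map hEmeas (hf n g).aestronglyMeasurable hTmeas.aemeasurable]
    refine integral_congr_ae (Filter.Eventually.of_forall fun x => ?_)
    refine tsum_congr fun k => ?_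
    have hnk : n + 1 - (k : ℤ) = n - (k : ℤ) + 1 := by ring
    rw [hnk]
  exact huniq _ hmapprob hcomp'
end
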